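/- arXiv:2403.01001 — 7 statements merged into one kernel-verified Lean document; each statement's English description precedes it below -/
import Mathlib

section
/- For any hypergraph H, the lazy burning number satisfies b_L(H) ≥ |V(H)| − ℰ(H), where ℰ(H) is the number of edges of H that are not singleton, empty, or duplicate edges. -/
open Finset

/-- A hypergraph: a finite vertex set together with a finite set of edges,
each edge being a subset of the vertex set. -/
structure LBHypergraph (α : Type*) [DecidableEq α] where
  verts : Finset α
  edges : Finset (Finset α)
  edges_sub : ∀ e ∈ edges, e ⊆ verts

namespace LBHypergraph

variable {α : Type*} [DecidableEq α]

/-- `Burns H S v`: starting from the initially burned set `S`, the vertex `v`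
eventually burns under the propagation rule: an unburned vertex `v` catches fire
when some non-singleton edge `e ∋ v` has all of `e \ {v}` burned. -/
inductive Burns (H : LBHypergraph α) (S : Finset α) : α → Prop
  | init {v : α} : v ∈ S → Burns H S v
  | prop {v : α} {e : Finset α} : v ∈ H.verts → e ∈ H.edges → 2 ≤ e.card → v ∈ e →
      (∀ u ∈ e, u ≠ v → Burns H S u) → Burns H S v

/-- A lazy burning set: a set of vertices whose propagation closure is all of `V(H)`. -/
def IsLazySet (H : LBHypergraph α) (S : Finset α) : Prop :=
  S ⊆ H.verts ∧ ∀ v ∈ H.verts, H.Burns S v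

/-- The lazy burning number: the minimum size of a lazy burning set. -/
noncomputable def lazyBurn (H : LBHypergraph α) : ℕ :=
  sInf {n | ∃ S : Finset α, H.IsLazySet S ∧ S.card = n}

/-- One round of fire propagation applied to the burned set `F`. -/
noncomputable def step (H : LBHypergraph α) (F : Finset α) : Finset α :=
  F ∪ H.verts.filter (fun v => ∃ e ∈ H.edges, 2 ≤ e.card ∧ v ∈ e ∧ e \ {v} ⊆ F)

/-- The set of burned vertices after playing the sources `us` in order
(each round: propagation happens, and simultaneously the next source is burned). -/
noncomputable def state (H : LBHypergraph α) (us : List α) : Finset α :=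
  us.foldl (fun F u => insert u (H.step F)) ∅

/-- `us` is a burning sequence for `H`: each source is a vertex that was not burned
at the end of the previous round, and after the final round all of `V(H)` is burned. -/
def IsBurningSeq (H : LBHypergraph α) (us : List α) : Prop :=
  (∀ i : Fin us.length, us.get i ∈ H.verts ∧ us.get i ∉ H.state (us.take i.1)) ∧
  H.state us = H.verts

/-- The (round-based) burning number: the minimum length of a burning sequence. -/
noncomputable def burn (H : LBHypergraph α) : ℕ :=
  sInf {n | ∃ us : List α, H.IsBurningSeq us ∧ us.length = n}

/-- An independent set of vertices: one containing no edge of `H`. -/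
def IsIndep (H : LBHypergraph α) (X : Finset α) : Prop :=
  X ⊆ H.verts ∧ ∀ e ∈ H.edges, ¬ e ⊆ X

/-- The independence number `α(H)`. -/
noncomputable def indepNum (H : LBHypergraph α) : ℕ :=
  sSup {n | ∃ X : Finset α, H.IsIndep X ∧ X.card = n}

/-- Two vertices are adjacent if they lie in a common edge. -/
def Adj (H : LBHypergraph α) (u v : α) : Prop :=
  ∃ e ∈ H.edges, u ∈ e ∧ v ∈ e

/-- Two vertices are connected if they are joined by a path (alternating
vertices and edges). -/
def Conn (H : LBHypergraph α) (u v : α) : Prop :=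
  Relation.ReflTransGen H.Adj u v

/-- A hypergraph is connected if every two vertices are connected. -/
def IsConnected (H : LBHypergraph α) : Prop :=
  ∀ u ∈ H.verts, ∀ v ∈ H.verts, H.Conn u v

/-- `G : Fin k → LBHypergraph α` is the family of connected components of `H`:
the vertex sets are nonempty, partition `V(H)`, each component carries exactly the
edges of `H` lying inside it, each component is connected, and components are
maximal with respect to connectivity. -/
def IsComponents (H : LBHypergraph α) {k : ℕ} (G : Fin k → LBHypergraph α) : Prop :=
  (∀ i, (G i).verts.Nonempty) ∧
  (∀ i, (G i).verts ⊆ H.verts) ∧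
  (∀ i, (G i).edges = H.edges.filter (fun e => e ⊆ (G i).verts)) ∧
  (∀ v ∈ H.verts, ∃! i, v ∈ (G i).verts) ∧
  (∀ i, ∀ u ∈ (G i).verts, ∀ v ∈ (G i).verts, H.Conn u v) ∧
  (∀ i, ∀ u ∈ (G i).verts, ∀ v ∈ H.verts, H.Conn u v → v ∈ (G i).verts)

end LBHypergraph


namespace LBHypergraph

variable {α : Type*} [DecidableEq α]

lemma burns_find (H : LBHypergraph α) (S F : Finset α) (hSF : S ⊆ F)
    {v : α} (hb : H.Burns S v) (hv : v ∉ F) :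
    ∃ w, ∃ e ∈ H.edges, w ∈ H.verts ∧ w ∉ F ∧ 2 ≤ e.card ∧ w ∈ e ∧
      ∀ u ∈ e, u ≠ w → u ∈ F := by
  induction hb with
  | init h => exact absurd (hSF h) hv
  | @prop w e hw he hcard hwe hall ih =>
    by_cases hsub : ∀ u ∈ e, u ≠ w → u ∈ F
    · exact ⟨w, e, he, hw, hv, hcard, hwe, hsub⟩
    · push_neg at hsub
      obtain ⟨u, hue, hune, huF⟩ := hsub
      exact ih u hue hune huF

lemma count_aux (H : LBHypergraph α) (S : Finset α) (hS : H.IsLazySet S) :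
    ∀ n (F : Finset α), S ⊆ F → F ⊆ H.verts → H.verts.card - F.card ≤ n →
      H.verts.card ≤ F.card +
        ((H.edges.filter (fun e => 2 ≤ e.card)).filter (fun e => ¬ e ⊆ F)).card := by
  intro n
  induction n with
  | zero =>
    intro F hSF hFv h
    have : H.verts.card ≤ F.card := by omega
    exact le_add_right this
  | succ n ih =>
    intro F hSF hFv h
    by_cases hall : H.verts ⊆ F
    · exact le_add_right (Finset.card_le_card hall)
    · obtain ⟨v, hv, hvF⟩ := Finset.not_subset.mp hall
      obtain ⟨w, e, he, hw, hwF, hcard, hwe, hsub⟩ :=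
        H.burns_find S F hSF (hS.2 v hv) hvF
      have key := ih (insert w F) (hSF.trans (Finset.subset_insert _ _))
        (Finset.insert_subset hw hFv) ?_
      · refine key.trans ?_
        rw [Finset.card_insert_of_notMem hwF]
        have hmono : ((H.edges.filter (fun e => 2 ≤ e.card)).filter
            (fun e => ¬ e ⊆ insert w F)) ⊆
            ((H.edges.filter (fun e => 2 ≤ e.card)).filter (fun e => ¬ e ⊆ F)).erase e := by
          intro x hx
          simp only [Finset.mem_filter, Finset.mem_erase] at hx ⊢
          refine ⟨?_, hx.1, fun hxF => hx.2 (hxF.trans (Finset.subset_insert _ _))⟩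
          rintro rfl
          exact hx.2 (fun u hu => by
            by_cases huw : u = w
            · exact huw ▸ Finset.mem_insert_self _ _
            · exact Finset.mem_insert_of_mem (hsub u hu huw))
        have hein : e ∈ ((H.edges.filter (fun e => 2 ≤ e.card)).filter (fun e => ¬ e ⊆ F)) := by
          simp only [Finset.mem_filter]
          exact ⟨⟨he, hcard⟩, fun hc => hwF (hc hwe)⟩
        have := Finset.card_le_card hmono
        rw [Finset.card_erase_of_mem hein] at this
        have hpos : 0 < ((H.edges.filter (fun e => 2 ≤ e.card)).filter
            (fun e => ¬ e ⊆ F)).card := Finset.card_pos.mpr ⟨e, hein⟩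
        omega
      · rw [Finset.card_insert_of_notMem hwF]
        have : F.card < H.verts.card :=
          Finset.card_lt_card (Finset.ssubset_iff_of_subset hFv |>.mpr ⟨w, hw, hwF⟩)
        omega

lemma key_count (H : LBHypergraph α) (S : Finset α) (hS : H.IsLazySet S) :
    H.verts.card ≤ S.card + (H.edges.filter (fun e => 2 ≤ e.card)).card := by
  have := H.count_aux S hS (H.verts.card - S.card) S le_rfl hS.1 le_rfl
  have h2 : ((H.edges.filter (fun e => 2 ≤ e.card)).filter (fun e => ¬ e ⊆ S)).card ≤
      (H.edges.filter (fun e => 2 ≤ e.card)).card :=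
    Finset.card_le_card (Finset.filter_subset _ _)
  omega

end LBHypergraph

theorem lazyBurn_ge_verts_sub_nontrivial_edges {α : Type*} [DecidableEq α]
    (H : LBHypergraph α) :
    H.verts.card - (H.edges.filter (fun e => 2 ≤ e.card)).card ≤ H.lazyBurn := by
  have hne : H.lazyBurn ∈ {n | ∃ S : Finset α, H.IsLazySet S ∧ S.card = n} := by
    apply Nat.sInf_mem
    exact ⟨H.verts.card, H.verts, ⟨le_rfl, fun v hv => LBHypergraph.Burns.init hv⟩, rfl⟩
  obtain ⟨S, hS, hcard⟩ := hne
  have := H.key_count S hS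
  omega
end

section
/- For any simple hypergraph H (no repeated edges and every edge has at least 2 vertices), b_L(H) ≥ |V(H)| − |E(H)|. -/
open Finset

/-- A hypergraph: a finite vertex set together with a finite set of edges,
each edge being a subset of the vertex set. -/
structure FinHypergraph (α : Type*) [DecidableEq α] where
  verts : Finset α
  edges : Finset (Finset α)
  edges_sub : ∀ e ∈ edges, e ⊆ verts

namespace FinHypergraph

variable {α : Type*} [DecidableEq α]

/-- `Burns H S v`: starting from the initially burned set `S`, the vertex `v`
eventually burns under the propagation rule: an unburned vertex `v` catches fire
when some non-singleton edge `e ∋ v` has all of `e \ {v}` burned. -/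
inductive Burns (H : FinHypergraph α) (S : Finset α) : α → Prop
  | init {v : α} : v ∈ S → Burns H S v
  | prop {v : α} {e : Finset α} : v ∈ H.verts → e ∈ H.edges → 2 ≤ e.card → v ∈ e →
      (∀ u ∈ e, u ≠ v → Burns H S u) → Burns H S v

/-- A lazy burning set: a set of vertices whose propagation closure is all of `V(H)`. -/
def IsLazySet (H : FinHypergraph α) (S : Finset α) : Prop :=
  S ⊆ H.verts ∧ ∀ v ∈ H.verts, H.Burns S v

/-- The lazy burning number: the minimum size of a lazy burning set. -/
noncomputable def lazyBurn (H : FinHypergraph α) : ℕ :=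
  sInf {n | ∃ S : Finset α, H.IsLazySet S ∧ S.card = n}

/-- One round of fire propagation applied to the burned set `F`. -/
noncomputable def step (H : FinHypergraph α) (F : Finset α) : Finset α :=
  F ∪ H.verts.filter (fun v => ∃ e ∈ H.edges, 2 ≤ e.card ∧ v ∈ e ∧ e \ {v} ⊆ F)

/-- The set of burned vertices after playing the sources `us` in order
(each round: propagation happens, and simultaneously the next source is burned). -/
noncomputable def state (H : FinHypergraph α) (us : List α) : Finset α :=
  us.foldl (fun F u => insert u (H.step F)) ∅

/-- `us` is a burning sequence for `H`: each source is a vertex that was not burned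
at the end of the previous round, and after the final round all of `V(H)` is burned. -/
def IsBurningSeq (H : FinHypergraph α) (us : List α) : Prop :=
  (∀ i : Fin us.length, us.get i ∈ H.verts ∧ us.get i ∉ H.state (us.take i.1)) ∧
  H.state us = H.verts

/-- The (round-based) burning number: the minimum length of a burning sequence. -/
noncomputable def burn (H : FinHypergraph α) : ℕ :=
  sInf {n | ∃ us : List α, H.IsBurningSeq us ∧ us.length = n}

/-- An independent set of vertices: one containing no edge of `H`. -/
def IsIndep (H : FinHypergraph α) (X : Finset α) : Prop :=
  X ⊆ H.verts ∧ ∀ e ∈ H.edges, ¬ e ⊆ X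

/-- The independence number `α(H)`. -/
noncomputable def indepNum (H : FinHypergraph α) : ℕ :=
  sSup {n | ∃ X : Finset α, H.IsIndep X ∧ X.card = n}

/-- Two vertices are adjacent if they lie in a common edge. -/
def Adj (H : FinHypergraph α) (u v : α) : Prop :=
  ∃ e ∈ H.edges, u ∈ e ∧ v ∈ e

/-- Two vertices are connected if they are joined by a path (alternating
vertices and edges). -/
def Conn (H : FinHypergraph α) (u v : α) : Prop :=
  Relation.ReflTransGen H.Adj u v

/-- A hypergraph is connected if every two vertices are connected. -/
def IsConnected (H : FinHypergraph α) : Prop :=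
  ∀ u ∈ H.verts, ∀ v ∈ H.verts, H.Conn u v

/-- `G : Fin k → FinHypergraph α` is the family of connected components of `H`:
the vertex sets are nonempty, partition `V(H)`, each component carries exactly the
edges of `H` lying inside it, each component is connected, and components are
maximal with respect to connectivity. -/
def IsComponents (H : FinHypergraph α) {k : ℕ} (G : Fin k → FinHypergraph α) : Prop :=
  (∀ i, (G i).verts.Nonempty) ∧
  (∀ i, (G i).verts ⊆ H.verts) ∧
  (∀ i, (G i).edges = H.edges.filter (fun e => e ⊆ (G i).verts)) ∧
  (∀ v ∈ H.verts, ∃! i, v ∈ (G i).verts) ∧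
  (∀ i, ∀ u ∈ (G i).verts, ∀ v ∈ (G i).verts, H.Conn u v) ∧
  (∀ i, ∀ u ∈ (G i).verts, ∀ v ∈ H.verts, H.Conn u v → v ∈ (G i).verts)

end FinHypergraph


open FinHypergraph in
lemma burns_erase_aux {α : Type*} [DecidableEq α] (H : FinHypergraph α) (S : Finset α)
    (v : α) (e : Finset α) (he : e ∈ H.edges) (hev : e \ {v} ⊆ S)
    (H' : FinHypergraph α) (hv : H'.verts = H.verts) (hed : H'.edges = H.edges.erase e) :
    ∀ w, H.Burns S w → H'.Burns (insert v S) w := by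
  intro w hw
  induction hw with
  | init h => exact Burns.init (Finset.mem_insert_of_mem h)
  | prop hwv hf hc hwf _ ih =>
    rename_i w f _
    by_cases hfe : f = e
    · subst hfe
      by_cases hwvv : w = v
      · exact Burns.init (hwvv ▸ Finset.mem_insert_self v S)
      · exact Burns.init (Finset.mem_insert_of_mem (hev (Finset.mem_sdiff.2
          ⟨hwf, by simp [hwvv]⟩)))
    · exact Burns.prop (hv ▸ hwv) (hed ▸ Finset.mem_erase.2 ⟨hfe, hf⟩) hc hwf
        (fun u hu hune => ih u hu hune)

open FinHypergraph in
lemma exists_front {α : Type*} [DecidableEq α] (H : FinHypergraph α) (S : Finset α)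
    {v : α} (hb : H.Burns S v) (hv : v ∉ S) :
    ∃ w e, w ∈ H.verts ∧ w ∉ S ∧ e ∈ H.edges ∧ w ∈ e ∧ e \ {w} ⊆ S := by
  induction hb with
  | init h => exact absurd h hv
  | prop hwv hf _ hwf hall ih =>
    rename_i w f _
    by_cases hsub : f \ {w} ⊆ S
    · exact ⟨w, f, hwv, hv, hf, hwf, hsub⟩
    · obtain ⟨u, hu, hus⟩ := Finset.not_subset.1 hsub
      obtain ⟨huf, hune⟩ := Finset.mem_sdiff.1 hu
      have hune' : u ≠ w := by simpa using hune
      exact ih u huf hune' hus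

open FinHypergraph in
lemma key_bound {α : Type*} [DecidableEq α] : ∀ n (H : FinHypergraph α),
    H.edges.card = n → ∀ S : Finset α, H.IsLazySet S →
    H.verts.card ≤ S.card + H.edges.card := by
  intro n
  induction n with
  | zero =>
    intro H hn S hS
    have : H.verts ⊆ S := by
      intro v hv
      have hb := hS.2 v hv
      by_contra hvs
      obtain ⟨w, e, _, _, he, _, _⟩ := exists_front H S hb hvs
      have := Finset.card_pos.2 ⟨e, he⟩
      omega
    have := Finset.card_le_card this
    omega
  | succ n ih =>
    intro H hn S hS
    by_cases hsub : H.verts ⊆ S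
    · have := Finset.card_le_card hsub; omega
    · obtain ⟨v, hv, hvs⟩ := Finset.not_subset.1 hsub
      obtain ⟨w, e, hwv, hws, he, hwe, hsub'⟩ := exists_front H S (hS.2 v hv) hvs
      set H' : FinHypergraph α := ⟨H.verts, H.edges.erase e,
        fun f hf => H.edges_sub f (Finset.mem_of_mem_erase hf)⟩ with hH'
      have hcard' : H'.edges.card = n := by
        simp only [hH']
        rw [Finset.card_erase_of_mem he, hn]
        omega
      have hlazy' : H'.IsLazySet (insert w S) := by
        constructor
        · exact Finset.insert_subset hwv hS.1
        · intro u hu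
          exact burns_erase_aux H S w e he hsub' H' rfl rfl u (hS.2 u hu)
      have h2 := ih H' hcard' (insert w S) hlazy'
      rw [hcard'] at h2
      have h3 : H'.verts = H.verts := rfl
      rw [h3] at h2
      have hci : (insert w S).card = S.card + 1 := Finset.card_insert_of_notMem hws
      omega

theorem lazyBurn_ge_verts_sub_edges_of_simple {α : Type*} [DecidableEq α]
    (H : FinHypergraph α) (hsimple : ∀ e ∈ H.edges, 2 ≤ e.card) :
    H.verts.card - H.edges.card ≤ H.lazyBurn := by
  have hne : H.verts ∈ {S : Finset α | H.IsLazySet S ∧ True} := ⟨⟨le_refl _, fun v hv => FinHypergraph.Burns.init hv⟩, trivial⟩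
  have hnonempty : {n | ∃ S : Finset α, H.IsLazySet S ∧ S.card = n}.Nonempty :=
    ⟨H.verts.card, H.verts, hne.1, rfl⟩
  obtain ⟨S, hS, hcard⟩ := Nat.sInf_mem hnonempty
  have := key_bound H.edges.card H rfl S hS
  unfold FinHypergraph.lazyBurn
  omega
end

section
/- For a simple hypergraph H with no isolated vertices and |V(H)| ≥ 2, |V(H)| − |E(H)| ≤ b_L(H) < b(H) ≤ α(H) + 1. -/
open Finset

/-- A hypergraph: a finite vertex set together with a finite set of edges,
each edge being a subset of the vertex set. -/
structure Hypergraph' (α : Type*) [DecidableEq α] where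
  verts : Finset α
  edges : Finset (Finset α)
  edges_sub : ∀ e ∈ edges, e ⊆ verts

namespace Hypergraph'

variable {α : Type*} [DecidableEq α]

/-- `Burns H S v`: starting from the initially burned set `S`, the vertex `v`
eventually burns under the propagation rule: an unburned vertex `v` catches fire
when some non-singleton edge `e ∋ v` has all of `e \ {v}` burned. -/
inductive Burns (H : Hypergraph' α) (S : Finset α) : α → Prop
  | init {v : α} : v ∈ S → Burns H S v
  | prop {v : α} {e : Finset α} : v ∈ H.verts → e ∈ H.edges → 2 ≤ e.card → v ∈ e →
      (∀ u ∈ e, u ≠ v → Burns H S u) → Burns H S v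

/-- A lazy burning set: a set of vertices whose propagation closure is all of `V(H)`. -/
def IsLazySet (H : Hypergraph' α) (S : Finset α) : Prop :=
  S ⊆ H.verts ∧ ∀ v ∈ H.verts, H.Burns S v

/-- The lazy burning number: the minimum size of a lazy burning set. -/
noncomputable def lazyBurn (H : Hypergraph' α) : ℕ :=
  sInf {n | ∃ S : Finset α, H.IsLazySet S ∧ S.card = n}

/-- One round of fire propagation applied to the burned set `F`. -/
noncomputable def step (H : Hypergraph' α) (F : Finset α) : Finset α :=
  F ∪ H.verts.filter (fun v => ∃ e ∈ H.edges, 2 ≤ e.card ∧ v ∈ e ∧ e \ {v} ⊆ F)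

/-- The set of burned vertices after playing the sources `us` in order
(each round: propagation happens, and simultaneously the next source is burned). -/
noncomputable def state (H : Hypergraph' α) (us : List α) : Finset α :=
  us.foldl (fun F u => insert u (H.step F)) ∅

/-- `us` is a burning sequence for `H`: each source is a vertex that was not burned
at the end of the previous round, and after the final round all of `V(H)` is burned. -/
def IsBurningSeq (H : Hypergraph' α) (us : List α) : Prop :=
  (∀ i : Fin us.length, us.get i ∈ H.verts ∧ us.get i ∉ H.state (us.take i.1)) ∧
  H.state us = H.verts

/-- The (round-based) burning number: the minimum length of a burning sequence. -/
noncomputable def burn (H : Hypergraph' α) : ℕ :=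
  sInf {n | ∃ us : List α, H.IsBurningSeq us ∧ us.length = n}

/-- An independent set of vertices: one containing no edge of `H`. -/
def IsIndep (H : Hypergraph' α) (X : Finset α) : Prop :=
  X ⊆ H.verts ∧ ∀ e ∈ H.edges, ¬ e ⊆ X

/-- The independence number `α(H)`. -/
noncomputable def indepNum (H : Hypergraph' α) : ℕ :=
  sSup {n | ∃ X : Finset α, H.IsIndep X ∧ X.card = n}

/-- Two vertices are adjacent if they lie in a common edge. -/
def Adj (H : Hypergraph' α) (u v : α) : Prop :=
  ∃ e ∈ H.edges, u ∈ e ∧ v ∈ e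

/-- Two vertices are connected if they are joined by a path (alternating
vertices and edges). -/
def Conn (H : Hypergraph' α) (u v : α) : Prop :=
  Relation.ReflTransGen H.Adj u v

/-- A hypergraph is connected if every two vertices are connected. -/
def IsConnected (H : Hypergraph' α) : Prop :=
  ∀ u ∈ H.verts, ∀ v ∈ H.verts, H.Conn u v

/-- `G : Fin k → Hypergraph' α` is the family of connected components of `H`:
the vertex sets are nonempty, partition `V(H)`, each component carries exactly the
edges of `H` lying inside it, each component is connected, and components are
maximal with respect to connectivity. -/
def IsComponents (H : Hypergraph' α) {k : ℕ} (G : Fin k → Hypergraph' α) : Prop :=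
  (∀ i, (G i).verts.Nonempty) ∧
  (∀ i, (G i).verts ⊆ H.verts) ∧
  (∀ i, (G i).edges = H.edges.filter (fun e => e ⊆ (G i).verts)) ∧
  (∀ v ∈ H.verts, ∃! i, v ∈ (G i).verts) ∧
  (∀ i, ∀ u ∈ (G i).verts, ∀ v ∈ (G i).verts, H.Conn u v) ∧
  (∀ i, ∀ u ∈ (G i).verts, ∀ v ∈ H.verts, H.Conn u v → v ∈ (G i).verts)

end Hypergraph'

namespace Hypergraph'
variable {α : Type*} [DecidableEq α] (H : Hypergraph' α)

theorem Burns.mono {S T : Finset α} {v : α} (h : H.Burns S v) (hST : S ⊆ T) :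
    H.Burns T v := by
  induction h with
  | init hv => exact .init (hST hv)
  | prop hv he hc hve _ ih => exact .prop hv he hc hve fun u hu hne => ih u hu hne

theorem subset_step (F : Finset α) : F ⊆ H.step F := subset_union_left

theorem step_subset {F : Finset α} (h : F ⊆ H.verts) : H.step F ⊆ H.verts :=
  union_subset h (filter_subset _ _)

theorem step_mono {F F' : Finset α} (h : F ⊆ F') : H.step F ⊆ H.step F' := by
  apply union_subset_union h
  intro v hv
  simp only [mem_filter] at hv ⊢
  obtain ⟨hv0, e, he, hc, hve, hsub⟩ := hv
  exact ⟨hv0, e, he, hc, hve, hsub.trans h⟩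

theorem state_nil : H.state ([] : List α) = ∅ := rfl

theorem state_concat (l : List α) (u : α) :
    H.state (l ++ [u]) = insert u (H.step (H.state l)) := by
  simp [state, List.foldl_append]

theorem mem_state_of_mem {l : List α} {u : α} (h : u ∈ l) : u ∈ H.state l := by
  induction l using List.reverseRecOn with
  | nil => simp at h
  | append_singleton l a ih =>
    rw [state_concat]
    rcases List.mem_append.1 h with h | h
    · exact mem_insert_of_mem (H.subset_step _ (ih h))
    · simp at h; simp [h]

theorem state_subset_verts {l : List α} (h : ∀ u ∈ l, u ∈ H.verts) :
    H.state l ⊆ H.verts := by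
  induction l using List.reverseRecOn with
  | nil => simp [state_nil]
  | append_singleton l a ih =>
    rw [state_concat]
    refine insert_subset (h a (by simp)) (H.step_subset (ih fun u hu => h u (by simp [hu])))

theorem burns_of_mem_state {l : List α} {v : α} (h : v ∈ H.state l) :
    H.Burns l.toFinset v := by
  induction l using List.reverseRecOn generalizing v with
  | nil => simp [state_nil] at h
  | append_singleton l a ih =>
    rw [state_concat] at h
    have hsub : l.toFinset ⊆ (l ++ [a]).toFinset := by simp
    rcases mem_insert.1 h with rfl | h
    · exact .init (by simp)
    · rcases mem_union.1 h with h | h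
      · exact (ih h).mono H hsub
      · simp only [mem_filter] at h
        obtain ⟨hv, e, he, hc, hve, hes⟩ := h
        refine .prop hv he hc hve fun u hu hne => ?_
        exact (ih (hes (mem_sdiff.2 ⟨hu, by simp [hne]⟩))).mono H hsub


theorem iter_subset_succ (S : Finset α) (n : ℕ) :
    H.step^[n] S ⊆ H.step^[n+1] S := by
  rw [Function.iterate_succ_apply']
  exact H.subset_step _

theorem iter_subset (S : Finset α) {m n : ℕ} (h : m ≤ n) :
    H.step^[m] S ⊆ H.step^[n] S := by
  induction n, h using Nat.le_induction with
  | base => exact Subset.rfl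
  | succ n _ ih => exact ih.trans (H.iter_subset_succ S n)

theorem iter_subset_verts {S : Finset α} (h : S ⊆ H.verts) (n : ℕ) :
    H.step^[n] S ⊆ H.verts := by
  induction n with
  | zero => exact h
  | succ n ih => rw [Function.iterate_succ_apply']; exact H.step_subset ih

theorem exists_iter_subset {S : Finset α} {t : Finset α}
    (h : ∀ u ∈ t, ∃ n, u ∈ H.step^[n] S) : ∃ N, t ⊆ H.step^[N] S := by
  classical
  induction t using Finset.induction with
  | empty => exact ⟨0, by simp⟩
  | @insert a t ha ih =>
    obtain ⟨N, hN⟩ := ih fun u hu => h u (mem_insert_of_mem hu)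
    obtain ⟨n, hn⟩ := h a (mem_insert_self a t)
    refine ⟨max n N, insert_subset ?_ ?_⟩
    · exact H.iter_subset S (le_max_left n N) hn
    · exact hN.trans (H.iter_subset S (le_max_right n N))

theorem burns_mem_iter {S : Finset α} {v : α} (h : H.Burns S v) :
    ∃ n, v ∈ H.step^[n] S := by
  induction h with
  | init hv => exact ⟨0, hv⟩
  | @prop v e hv he hc hve _ ih =>
    obtain ⟨N, hN⟩ := H.exists_iter_subset (t := e \ {v})
      (fun u hu => ih u (mem_sdiff.1 hu).1 (by simpa using (mem_sdiff.1 hu).2))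
    refine ⟨N + 1, ?_⟩
    rw [Function.iterate_succ_apply']
    exact mem_union_right _ (mem_filter.2 ⟨hv, e, he, hc, hve, hN⟩)

theorem card_step_key (F : Finset α) :
    (H.step F).card + (H.edges.filter (· ⊆ F)).card ≤
      F.card + (H.edges.filter (· ⊆ H.step F)).card := by
  classical
  have hFs : F ⊆ H.step F := H.subset_step F
  have hfs : H.edges.filter (· ⊆ F) ⊆ H.edges.filter (· ⊆ H.step F) :=
    monotone_filter_right _ (fun e _ (he : e ⊆ F) => he.trans hFs)
  set P := fun v => ∃ e ∈ H.edges, 2 ≤ e.card ∧ v ∈ e ∧ e \ {v} ⊆ F with hP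
  have key : ((H.step F) \ F).card ≤
      ((H.edges.filter (· ⊆ H.step F)) \ (H.edges.filter (· ⊆ F))).card := by
    have hmem : ∀ v ∈ (H.step F) \ F, P v := by
      intro v hv
      rcases mem_sdiff.1 hv with ⟨hv1, hv2⟩
      rcases mem_union.1 hv1 with h | h
      · exact absurd h hv2
      · exact (mem_filter.1 h).2
    set f : α → Finset α := fun v => if h : P v then h.choose else ∅ with hf
    apply card_le_card_of_injOn f
    · intro v hv
      have hp := hmem v hv
      have hspec := hp.choose_spec
      simp only [hf, dif_pos hp]
      obtain ⟨he, hc, hve, hes⟩ := hspec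
      rcases mem_sdiff.1 hv with ⟨hv1, hv2⟩
      refine mem_sdiff.2 ⟨mem_filter.2 ⟨he, ?_⟩, ?_⟩
      · intro u hu
        by_cases huv : u = v
        · exact huv ▸ hv1
        · exact hFs (hes (mem_sdiff.2 ⟨hu, by simp [huv]⟩))
      · intro hcon
        exact hv2 ((mem_filter.1 hcon).2 hve)
    · intro v hv w hw hvw
      by_contra hne
      have hpv := hmem v hv
      have hpw := hmem w hw
      have hsv := hpv.choose_spec
      have hsw := hpw.choose_spec
      simp only [hf, dif_pos hpv, dif_pos hpw] at hvw
      obtain ⟨_, _, hvev, hesv⟩ := hsv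
      obtain ⟨_, _, hwew, hesw⟩ := hsw
      have : w ∈ hpv.choose \ {v} := by
        rw [hvw]; exact mem_sdiff.2 ⟨hwew, by simp [Ne.symm, hne]⟩
      exact (mem_sdiff.1 hw).2 (hesv this)
  have h1 : ((H.step F) \ F).card = (H.step F).card - F.card := card_sdiff_of_subset hFs
  have h2 := card_sdiff_of_subset hfs
  have h3 := card_le_card hFs
  have h4 := card_le_card hfs
  omega

theorem card_iter_le (S : Finset α) (n : ℕ) :
    (H.step^[n] S).card ≤ S.card + (H.edges.filter (· ⊆ H.step^[n] S)).card := by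
  classical
  induction n with
  | zero => simp
  | succ n ih =>
    have key := H.card_step_key (H.step^[n] S)
    rw [Function.iterate_succ_apply']
    omega

theorem verts_card_le_of_lazy {S : Finset α} (hS : H.IsLazySet S) :
    H.verts.card ≤ S.card + H.edges.card := by
  classical
  obtain ⟨N, hN⟩ := H.exists_iter_subset (t := H.verts) (S := S)
    (fun v hv => H.burns_mem_iter (hS.2 v hv))
  have h1 := card_le_card hN
  have h2 := H.card_iter_le S N
  have h3 := card_filter_le H.edges (· ⊆ H.step^[N] S)
  omega


theorem cond_append {us vs : List α}
    (h : ∀ i : Fin us.length, us.get i ∈ H.verts ∧ us.get i ∉ H.state (us.take i.1))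
    (i : Fin (us ++ vs).length) (hi : i.1 < us.length) :
    ((us ++ vs).get i ∈ H.verts ∧ (us ++ vs).get i ∉ H.state ((us ++ vs).take i.1))
    ↔ (us.get ⟨i.1, hi⟩ ∈ H.verts ∧ us.get ⟨i.1, hi⟩ ∉ H.state (us.take i.1)) := by
  have h1 : (us ++ vs).get i = us.get ⟨i.1, hi⟩ := by
    simp [List.getElem_append_left hi]
  have h2 : (us ++ vs).take i.1 = us.take i.1 :=
    List.take_append_of_le_length (le_of_lt hi)
  rw [h1, h2]

theorem mem_verts_of_cond {us : List α}
    (h : ∀ i : Fin us.length, us.get i ∈ H.verts ∧ us.get i ∉ H.state (us.take i.1)) :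
    ∀ u ∈ us, u ∈ H.verts := by
  intro u hu
  obtain ⟨i, rfl⟩ := List.mem_iff_get.1 hu
  exact (h i).1

theorem burning_aux (hsimple : ∀ e ∈ H.edges, 2 ≤ e.card) :
    ∀ n (us : List α), (H.verts \ H.state us).card ≤ n →
    (∀ i : Fin us.length, us.get i ∈ H.verts ∧ us.get i ∉ H.state (us.take i.1)) →
    H.IsIndep us.toFinset →
    ∃ ws, H.IsBurningSeq (us ++ ws) ∧ H.IsIndep ((us ++ ws).dropLast).toFinset := by
  intro n
  induction n with
  | zero =>
    intro us hcard hcond hindep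
    have hstate : H.state us ⊆ H.verts := H.state_subset_verts (H.mem_verts_of_cond hcond)
    have hfull : H.state us = H.verts := by
      apply Subset.antisymm hstate
      intro v hv
      by_contra hvn
      have hmem : v ∈ H.verts \ H.state us := mem_sdiff.2 ⟨hv, hvn⟩
      have := card_pos.2 ⟨v, hmem⟩
      omega
    refine ⟨[], ?_, ?_⟩
    · rw [List.append_nil]; exact ⟨hcond, hfull⟩
    · rw [List.append_nil]
      refine ⟨fun x hx => hindep.1 ?_, fun e he hcon => hindep.2 e he (hcon.trans fun x hx => ?_)⟩
      all_goals
        exact List.mem_toFinset.2 ((List.dropLast_sublist us).subset (List.mem_toFinset.1 hx))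
  | succ n ih =>
    intro us hcard hcond hindep
    have hstate : H.state us ⊆ H.verts := H.state_subset_verts (H.mem_verts_of_cond hcond)
    by_cases hfull : H.state us = H.verts
    · exact ih us (by rw [hfull]; simp) hcond hindep
    · have hne : (H.verts \ H.state us).Nonempty := by
        rw [sdiff_nonempty]
        intro hsub
        exact hfull (Subset.antisymm hstate hsub)
      by_cases hA : ∃ v ∈ H.verts \ H.state us, ∀ e ∈ H.edges, ¬ e ⊆ insert v us.toFinset
      · obtain ⟨v, hv, hvind⟩ := hA
        rcases mem_sdiff.1 hv with ⟨hvV, hvS⟩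
        have hlen : (us ++ [v]).length = us.length + 1 := by simp
        have hstate' : H.state (us ++ [v]) = insert v (H.step (H.state us)) :=
          H.state_concat us v
        have hmeas : (H.verts \ H.state (us ++ [v])).card ≤ n := by
          have hsub1 : H.verts \ H.state (us ++ [v]) ⊆ (H.verts \ H.state us).erase v := by
            intro x hx
            rcases mem_sdiff.1 hx with ⟨hx1, hx2⟩
            rw [hstate'] at hx2
            refine mem_erase.2 ⟨?_, mem_sdiff.2 ⟨hx1, ?_⟩⟩
            · rintro rfl; exact hx2 (mem_insert_self _ _)
            · intro hxs
              exact hx2 (mem_insert_of_mem (H.subset_step _ hxs))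
          have h1 := card_le_card hsub1
          have h2 := card_erase_of_mem hv
          have h3 := card_pos.2 ⟨v, hv⟩
          omega
        have hcond' : ∀ i : Fin (us ++ [v]).length,
            (us ++ [v]).get i ∈ H.verts ∧ (us ++ [v]).get i ∉ H.state ((us ++ [v]).take i.1) := by
          intro i
          rcases lt_or_ge i.1 us.length with hi | hi
          · exact (H.cond_append hcond i hi).2 (hcond ⟨i.1, hi⟩)
          · have hieq : i.1 = us.length := by
              have h2 := i.2
              simp only [List.length_append, List.length_singleton] at h2
              omega
            have hget : (us ++ [v]).get i = v := by
              simp only [List.get_eq_getElem]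
              rw [List.getElem_append_right (by omega)]
              simp [hieq]
            have htake : (us ++ [v]).take i.1 = us := by
              rw [hieq]; exact List.take_left
            rw [hget, htake]
            exact ⟨hvV, hvS⟩
        have htof : (us ++ [v]).toFinset = insert v us.toFinset := by
          ext x; simp [or_comm]
        have hindep' : H.IsIndep (us ++ [v]).toFinset := by
          rw [htof]
          exact ⟨insert_subset hvV hindep.1, hvind⟩
        obtain ⟨ws, hbs, hind⟩ := ih (us ++ [v]) hmeas hcond' hindep'
        refine ⟨v :: ws, ?_, ?_⟩
        · rwa [show us ++ v :: ws = (us ++ [v]) ++ ws by simp]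
        · rwa [show us ++ v :: ws = (us ++ [v]) ++ ws by simp]
      · push_neg at hA
        obtain ⟨v0, hv0⟩ := hne
        rcases mem_sdiff.1 hv0 with ⟨hv0V, hv0S⟩
        have hlen : (us ++ [v0]).length = us.length + 1 := by simp
        have hcond' : ∀ i : Fin (us ++ [v0]).length,
            (us ++ [v0]).get i ∈ H.verts ∧ (us ++ [v0]).get i ∉ H.state ((us ++ [v0]).take i.1) := by
          intro i
          rcases lt_or_ge i.1 us.length with hi | hi
          · exact (H.cond_append hcond i hi).2 (hcond ⟨i.1, hi⟩)
          · have hieq : i.1 = us.length := by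
              have h2 := i.2
              simp only [List.length_append, List.length_singleton] at h2
              omega
            have hget : (us ++ [v0]).get i = v0 := by
              simp only [List.get_eq_getElem]
              rw [List.getElem_append_right (by omega)]
              simp [hieq]
            have htake : (us ++ [v0]).take i.1 = us := by
              rw [hieq]; exact List.take_left
            rw [hget, htake]
            exact ⟨hv0V, hv0S⟩
        have hfin : H.state (us ++ [v0]) = H.verts := by
          rw [H.state_concat]
          apply Subset.antisymm
          · exact insert_subset hv0V (H.step_subset hstate)
          · intro w hw
            by_cases hws : w ∈ H.state us
            · exact mem_insert_of_mem (H.subset_step _ hws)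
            · by_cases hwv : w = v0
              · exact hwv ▸ mem_insert_self _ _
              · obtain ⟨e, he, hsub⟩ := hA w (mem_sdiff.2 ⟨hw, hws⟩)
                have hnotin : ¬ e ⊆ us.toFinset := hindep.2 e he
                have hwe : w ∈ e := by
                  by_contra hwe
                  exact hnotin fun x hx => by
                    rcases mem_insert.1 (hsub hx) with rfl | hx'
                    · exact absurd hx hwe
                    · exact hx'
                have hes : e \ {w} ⊆ H.state us := by
                  intro x hx
                  rcases mem_sdiff.1 hx with ⟨hx1, hx2⟩
                  rcases mem_insert.1 (hsub hx1) with rfl | hx'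
                  · exact absurd (mem_singleton_self x) hx2
                  · exact H.mem_state_of_mem (List.mem_toFinset.1 hx')
                exact mem_insert_of_mem (mem_union_right _
                  (mem_filter.2 ⟨hw, e, he, hsimple e he, hwe, hes⟩))
        refine ⟨[v0], ⟨hcond', hfin⟩, ?_⟩
        rw [List.dropLast_concat]
        exact hindep

theorem burningSeq_nodup {us : List α}
    (h : ∀ i : Fin us.length, us.get i ∈ H.verts ∧ us.get i ∉ H.state (us.take i.1)) :
    us.Nodup := by
  rw [List.nodup_iff_injective_get]
  intro i j hij
  by_contra hne
  have key : ∀ (i j : Fin us.length), i.1 < j.1 → us.get i = us.get j → False := by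
    intro i j hlt hij
    have hmem : us.get i ∈ us.take j.1 := by
      rw [List.mem_iff_getElem]
      refine ⟨i.1, ?_, ?_⟩
      · rw [List.length_take]; exact lt_min hlt i.2
      · simp
    have hj := (h j).2
    rw [← hij] at hj
    exact hj (H.mem_state_of_mem hmem)
  rcases lt_trichotomy i.1 j.1 with h' | h' | h'
  · exact key i j h' hij
  · exact hne (Fin.ext h')
  · exact key j i h' hij.symm

theorem exists_burningSeq (hsimple : ∀ e ∈ H.edges, 2 ≤ e.card) :
    ∃ us, H.IsBurningSeq us ∧ us.length ≤ H.indepNum + 1 := by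
  have hindep0 : H.IsIndep ([] : List α).toFinset := by
    refine ⟨by simp, fun e he hcon => ?_⟩
    have h2 := hsimple e he
    have he' : e = ∅ := subset_empty.1 (by simpa using hcon)
    simp [he'] at h2
  obtain ⟨ws, hbs, hind⟩ := H.burning_aux hsimple (H.verts \ H.state []).card []
    le_rfl (by intro i; exact absurd i.2 (by simp)) hindep0
  simp only [List.nil_append] at hbs hind
  refine ⟨ws, hbs, ?_⟩
  have hnodup : ws.Nodup := H.burningSeq_nodup hbs.1
  have hcard : ws.dropLast.toFinset.card = ws.dropLast.length :=
    List.toFinset_card_of_nodup ((List.dropLast_sublist ws).nodup hnodup)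
  have hbdd : BddAbove {n | ∃ X : Finset α, H.IsIndep X ∧ X.card = n} := by
    refine ⟨H.verts.card, ?_⟩
    rintro n ⟨X, hX, rfl⟩
    exact card_le_card hX.1
  have hle : ws.dropLast.toFinset.card ≤ H.indepNum :=
    le_csSup hbdd ⟨ws.dropLast.toFinset, hind, rfl⟩
  have hl := ws.length_dropLast
  omega

end Hypergraph'

theorem verts_sub_edges_le_lazyBurn_lt_burn_le_indepNum_add_one {α : Type*} [DecidableEq α]
    (H : Hypergraph' α) (hsimple : ∀ e ∈ H.edges, 2 ≤ e.card)
    (hnoiso : ∀ v ∈ H.verts, ∃ e ∈ H.edges, v ∈ e) (hcard : 2 ≤ H.verts.card) :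
    H.verts.card - H.edges.card ≤ H.lazyBurn ∧
    H.lazyBurn < H.burn ∧ H.burn ≤ H.indepNum + 1 := by
  classical
  have hlbdef : sInf {n | ∃ S : Finset α, H.IsLazySet S ∧ S.card = n} = H.lazyBurn := rfl
  have hbdef : sInf {n | ∃ us : List α, H.IsBurningSeq us ∧ us.length = n} = H.burn := rfl
  -- a lazy set exists (all of V), so sInf is attained
  have hlazyV : H.IsLazySet H.verts := ⟨Finset.Subset.rfl, fun v hv => .init hv⟩
  have hLne : {n | ∃ S : Finset α, H.IsLazySet S ∧ S.card = n}.Nonempty :=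
    ⟨H.verts.card, H.verts, hlazyV, rfl⟩
  obtain ⟨S0, hS0, hS0card⟩ := Nat.sInf_mem hLne
  rw [hlbdef] at hS0card
  have hpart1 : H.verts.card ≤ H.lazyBurn + H.edges.card := by
    have h1 := H.verts_card_le_of_lazy hS0
    omega
  -- a burning sequence exists
  obtain ⟨us, hus, huslen⟩ := H.exists_burningSeq hsimple
  have hBne : {n | ∃ us, H.IsBurningSeq us ∧ us.length = n}.Nonempty :=
    ⟨us.length, us, hus, rfl⟩
  obtain ⟨ub, hub, hublen⟩ := Nat.sInf_mem hBne
  rw [hbdef] at hublen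
  have hpart3 : H.burn ≤ H.indepNum + 1 :=
    le_trans (le_of_eq_of_le hbdef.symm (Nat.sInf_le ⟨us, hus, rfl⟩)) huslen
  have hub_ne : ub ≠ [] := by
    intro h
    have h2 := hub.2
    rw [h, H.state_nil] at h2
    rw [← h2] at hcard
    simp at hcard
  have hblen : 1 ≤ ub.length := List.length_pos_iff.2 hub_ne
  set L := ub.dropLast with hL
  set z := ub.getLast hub_ne with hz
  have hsplit : L ++ [z] = ub := List.dropLast_append_getLast hub_ne
  have hstate_eq : insert z (H.step (H.state L)) = H.verts := by
    rw [← H.state_concat, hsplit]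
    exact hub.2
  have hburnstep : ∀ w ∈ H.step (H.state L), H.Burns L.toFinset w := by
    intro w hw
    rcases Finset.mem_union.1 hw with hw | hw
    · exact H.burns_of_mem_state hw
    · obtain ⟨hwV, e, he, hc, hwe, hes⟩ := Finset.mem_filter.1 hw
      exact .prop hwV he hc hwe fun u hu hne =>
        H.burns_of_mem_state (hes (Finset.mem_sdiff.2 ⟨hu, by simp [hne]⟩))
  have hlazy : H.IsLazySet L.toFinset := by
    constructor
    · intro x hx
      exact H.mem_verts_of_cond hub.1 x
        ((List.dropLast_sublist ub).subset (List.mem_toFinset.1 hx))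
    · intro v hv
      by_cases hvz : v = z
      · obtain ⟨e, he, hze⟩ := hnoiso v hv
        refine .prop hv he (hsimple e he) hze fun u hu hne => ?_
        have huV : u ∈ H.verts := H.edges_sub e he hu
        rw [← hstate_eq] at huV
        rcases Finset.mem_insert.1 huV with h1 | h1
        · exact absurd (h1.trans hvz.symm) hne
        · exact hburnstep u h1
      · have hv2 := hv
        rw [← hstate_eq] at hv2
        rcases Finset.mem_insert.1 hv2 with h1 | h1
        · exact absurd h1 hvz
        · exact hburnstep v h1
  have hnodup : ub.Nodup := H.burningSeq_nodup hub.1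
  have hcardL : L.toFinset.card = L.length :=
    List.toFinset_card_of_nodup ((List.dropLast_sublist ub).nodup hnodup)
  have hlb : H.lazyBurn ≤ ub.length - 1 := by
    have h1 : H.lazyBurn ≤ L.toFinset.card :=
      le_of_eq_of_le hlbdef.symm (Nat.sInf_le ⟨L.toFinset, hlazy, rfl⟩)
    have h3 : L.length = ub.length - 1 := ub.length_dropLast
    omega
  exact ⟨by omega, by omega, hpart3⟩
end

section
/- For the tight 3-uniform path H on n ≥ 3 vertices, b(H) = ⌈√(2n−1)⌉. -/
open Finset

/-- The 3-uniform tight path on `n` vertices `0, 1, ..., n-1`, with edges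
`{i, i+1, i+2}` for `0 ≤ i ≤ n-3`. -/
def tightPath (n : ℕ) : FinHypergraph ℕ where
  verts := Finset.range n
  edges := (Finset.range (n - 2)).image (fun i => {i, i + 1, i + 2})
  edges_sub := by
    intro e he
    simp only [Finset.mem_image, Finset.mem_range] at he
    obtain ⟨i, hi, rfl⟩ := he
    intro x hx
    simp only [Finset.mem_insert, Finset.mem_singleton] at hx
    simp only [Finset.mem_range]
    rcases hx with rfl | rfl | rfl <;> omega

namespace TPB

open Finset FinHypergraph

/-- Local burning pattern for the tight path. -/
def pat (n : ℕ) (F : Finset ℕ) (v : ℕ) : Prop :=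
  (2 ≤ v ∧ v < n ∧ v - 2 ∈ F ∧ v - 1 ∈ F) ∨
  (1 ≤ v ∧ v + 1 < n ∧ v - 1 ∈ F ∧ v + 1 ∈ F) ∨
  (v + 2 < n ∧ v + 1 ∈ F ∧ v + 2 ∈ F)

instance (n : ℕ) (F : Finset ℕ) : DecidablePred (pat n F) := fun v => by
  unfold pat; infer_instance

lemma pat_mono {n : ℕ} {F G : Finset ℕ} (h : F ⊆ G) {v : ℕ} (hp : pat n F v) :
    pat n G v := by
  unfold pat at *
  rcases hp with ⟨h1, h2, h3, h4⟩ | ⟨h1, h2, h3, h4⟩ | ⟨h1, h2, h3⟩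
  · exact Or.inl ⟨h1, h2, h h3, h h4⟩
  · exact Or.inr (Or.inl ⟨h1, h2, h h3, h h4⟩)
  · exact Or.inr (Or.inr ⟨h1, h h2, h h3⟩)

lemma card_triple (i : ℕ) : ({i, i+1, i+2} : Finset ℕ).card = 3 := by
  rw [Finset.card_insert_of_notMem (by simp only [Finset.mem_insert, Finset.mem_singleton]; omega),
      Finset.card_insert_of_notMem (by simp only [Finset.mem_singleton]; omega), Finset.card_singleton]

lemma mem_edges_iff {n : ℕ} {e : Finset ℕ} :
    e ∈ (tightPath n).edges ↔ ∃ i, i + 2 < n ∧ e = {i, i+1, i+2} := by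
  simp only [tightPath, Finset.mem_image, Finset.mem_range]
  constructor
  · rintro ⟨i, hi, rfl⟩; exact ⟨i, by omega, rfl⟩
  · rintro ⟨i, hi, rfl⟩; exact ⟨i, by omega, rfl⟩

lemma verts_eq (n : ℕ) : (tightPath n).verts = Finset.range n := rfl

lemma mem_step_iff {n : ℕ} {F : Finset ℕ} {v : ℕ} :
    v ∈ (tightPath n).step F ↔ v ∈ F ∨ pat n F v := by
  unfold FinHypergraph.step
  simp only [Finset.mem_union, Finset.mem_filter, verts_eq, Finset.mem_range]
  constructor
  · rintro (h | ⟨hv, e, he, _, hve, hsub⟩)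
    · exact Or.inl h
    · right
      rw [mem_edges_iff] at he
      obtain ⟨i, hi, rfl⟩ := he
      simp only [Finset.mem_insert, Finset.mem_singleton] at hve
      have hs : ∀ x, (x = i ∨ x = i + 1 ∨ x = i + 2) → x ≠ v → x ∈ F := by
        intro x hx hne
        apply hsub
        simp only [Finset.mem_sdiff, Finset.mem_insert, Finset.mem_singleton]
        exact ⟨hx, hne⟩
      unfold pat
      rcases hve with h | h | h
      · refine Or.inr (Or.inr ⟨by omega, ?_, ?_⟩)
        · exact hs (v+1) (by omega) (by omega)
        · exact hs (v+2) (by omega) (by omega)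
      · refine Or.inr (Or.inl ⟨by omega, by omega, ?_, ?_⟩)
        · exact hs (v-1) (by omega) (by omega)
        · exact hs (v+1) (by omega) (by omega)
      · refine Or.inl ⟨by omega, by omega, ?_, ?_⟩
        · exact hs (v-2) (by omega) (by omega)
        · exact hs (v-1) (by omega) (by omega)
  · rintro (h | hp)
    · exact Or.inl h
    · right
      rcases hp with ⟨h1, h2, h3, h4⟩ | ⟨h1, h2, h3, h4⟩ | ⟨h1, h2, h3⟩
      · refine ⟨by omega, {v-2, v-1, v}, ?_, ?_, by simp, ?_⟩
        · rw [mem_edges_iff]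
          exact ⟨v - 2, by omega, by rw [show v-2+1 = v-1 by omega, show v-2+2 = v by omega]⟩
        · have he : ({v-2, v-1, v} : Finset ℕ) = {v-2, (v-2)+1, (v-2)+2} := by
            rw [show v-2+1 = v-1 by omega, show v-2+2 = v by omega]
          rw [he, card_triple]; omega
        · intro x hx
          simp only [Finset.mem_sdiff, Finset.mem_insert, Finset.mem_singleton] at hx
          have : x = v - 2 ∨ x = v - 1 := by omega
          rcases this with rfl | rfl <;> assumption
      · refine ⟨by omega, {v-1, v, v+1}, ?_, ?_, by simp, ?_⟩
        · rw [mem_edges_iff]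
          exact ⟨v - 1, by omega, by rw [show v-1+1 = v by omega, show v-1+2 = v+1 by omega]⟩
        · have he : ({v-1, v, v+1} : Finset ℕ) = {v-1, (v-1)+1, (v-1)+2} := by
            rw [show v-1+1 = v by omega, show v-1+2 = v+1 by omega]
          rw [he, card_triple]; omega
        · intro x hx
          simp only [Finset.mem_sdiff, Finset.mem_insert, Finset.mem_singleton] at hx
          have : x = v - 1 ∨ x = v + 1 := by omega
          rcases this with rfl | rfl <;> assumption
      · refine ⟨by omega, {v, v+1, v+2}, ?_, ?_, by simp, ?_⟩
        · rw [mem_edges_iff]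
          exact ⟨v, by omega, rfl⟩
        · rw [card_triple]; omega
        · intro x hx
          simp only [Finset.mem_sdiff, Finset.mem_insert, Finset.mem_singleton] at hx
          have : x = v + 1 ∨ x = v + 2 := by omega
          rcases this with rfl | rfl <;> assumption

end TPB
namespace TPB

open Finset FinHypergraph

lemma subset_step {n : ℕ} (F : Finset ℕ) : F ⊆ (tightPath n).step F :=
  Finset.subset_union_left

lemma step_mono {n : ℕ} {F G : Finset ℕ} (h : F ⊆ G) :
    (tightPath n).step F ⊆ (tightPath n).step G := by
  intro v hv
  rw [mem_step_iff] at *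
  rcases hv with hv | hv
  · exact Or.inl (h hv)
  · exact Or.inr (pat_mono h hv)

lemma stepIter_mono {n : ℕ} (k : ℕ) {F G : Finset ℕ} (h : F ⊆ G) :
    (tightPath n).step^[k] F ⊆ (tightPath n).step^[k] G := by
  induction k generalizing F G with
  | zero => simpa using h
  | succ k ih =>
    rw [Function.iterate_succ_apply, Function.iterate_succ_apply]
    exact ih (step_mono h)

lemma subset_stepIter {n : ℕ} (k : ℕ) (F : Finset ℕ) :
    F ⊆ (tightPath n).step^[k] F := by
  induction k with
  | zero => simp
  | succ k ih =>
    rw [Function.iterate_succ_apply']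
    exact ih.trans (subset_step _)

lemma step_subset_range {n : ℕ} {F : Finset ℕ} (h : F ⊆ Finset.range n) :
    (tightPath n).step F ⊆ Finset.range n := by
  intro v hv
  rw [mem_step_iff] at hv
  rcases hv with hv | hv
  · exact h hv
  · rcases hv with ⟨_, h2, _, _⟩ | ⟨_, h2, _, _⟩ | ⟨h2, _, _⟩ <;> (rw [Finset.mem_range]; omega)

lemma state_nil {n : ℕ} : (tightPath n).state [] = ∅ := rfl

lemma state_append {n : ℕ} (us vs : List ℕ) :
    (tightPath n).state (us ++ vs) =
      vs.foldl (fun F u => insert u ((tightPath n).step F)) ((tightPath n).state us) := by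
  unfold FinHypergraph.state
  rw [List.foldl_append]

lemma state_snoc {n : ℕ} (us : List ℕ) (u : ℕ) :
    (tightPath n).state (us ++ [u]) = insert u ((tightPath n).step ((tightPath n).state us)) := by
  rw [state_append]; rfl

lemma stepIter_subset_state_append {n : ℕ} (us vs : List ℕ) :
    (tightPath n).step^[vs.length] ((tightPath n).state us) ⊆ (tightPath n).state (us ++ vs) := by
  induction vs using List.reverseRecOn with
  | nil => simp
  | append_singleton vs u ih =>
    rw [← List.append_assoc, state_snoc, List.length_append, List.length_singleton,
      Function.iterate_succ_apply']
    exact ((step_mono ih).trans (Finset.subset_insert _ _))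

lemma state_subset_state_append {n : ℕ} (us vs : List ℕ) :
    (tightPath n).state us ⊆ (tightPath n).state (us ++ vs) :=
  (subset_stepIter vs.length _).trans (stepIter_subset_state_append us vs)

lemma mem_state_of_mem {n : ℕ} {us : List ℕ} {u : ℕ} (h : u ∈ us) :
    u ∈ (tightPath n).state us := by
  induction us using List.reverseRecOn with
  | nil => simp at h
  | append_singleton vs w ih =>
    rw [state_snoc]
    rcases List.mem_append.1 h with h | h
    · exact Finset.mem_insert_of_mem (subset_step _ (ih h))
    · simp only [List.mem_singleton] at h
      subst h
      exact Finset.mem_insert_self _ _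

lemma state_subset_range {n : ℕ} {us : List ℕ} (h : ∀ u ∈ us, u < n) :
    (tightPath n).state us ⊆ Finset.range n := by
  induction us using List.reverseRecOn with
  | nil => rw [state_nil]; exact Finset.empty_subset _
  | append_singleton vs u ih =>
    rw [state_snoc]
    have h1 : ∀ u ∈ vs, u < n := fun x hx => h x (List.mem_append.2 (Or.inl hx))
    have h2 : u < n := h u (List.mem_append.2 (Or.inr (by simp)))
    intro x hx
    rcases Finset.mem_insert.1 hx with rfl | hx
    · exact Finset.mem_range.2 h2
    · exact step_subset_range (ih h1) hx

end TPB
namespace TPB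

open Finset FinHypergraph

/-- Boundary vertices of `F`: left ends or right ends of maximal runs. -/
def ends (F : Finset ℕ) : Finset ℕ :=
  F.filter (fun v => v = 0 ∨ v - 1 ∉ F ∨ v + 1 ∉ F)

/-- The potential: the number of boundary vertices. -/
def pot (F : Finset ℕ) : ℕ := (ends F).card

lemma mem_ends {F : Finset ℕ} {v : ℕ} :
    v ∈ ends F ↔ v ∈ F ∧ (v = 0 ∨ v - 1 ∉ F ∨ v + 1 ∉ F) := Finset.mem_filter

lemma ends_insert_subset (F : Finset ℕ) (u : ℕ) :
    ends (insert u F) ⊆ insert u (ends F) := by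
  intro x hx
  rw [mem_ends] at hx
  obtain ⟨hxF, hc⟩ := hx
  rcases Finset.mem_insert.1 hxF with rfl | hxF
  · exact Finset.mem_insert_self _ _
  · refine Finset.mem_insert_of_mem (mem_ends.2 ⟨hxF, ?_⟩)
    rcases hc with h | h | h
    · exact Or.inl h
    · exact Or.inr (Or.inl (fun hm => h (Finset.mem_insert_of_mem hm)))
    · exact Or.inr (Or.inr (fun hm => h (Finset.mem_insert_of_mem hm)))

lemma pot_insert_le (F : Finset ℕ) (u : ℕ) : pot (insert u F) ≤ pot F + 1 :=
  le_trans (Finset.card_le_card (ends_insert_subset F u)) (Finset.card_insert_le _ _)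

lemma pot_insert_pat_le {n : ℕ} {G : Finset ℕ} {v : ℕ} (hv : v ∉ G) (hp : pat n G v) :
    pot (insert v G) ≤ pot G := by
  have key : ∀ y, y ∈ ends G → y ∉ ends (insert v G) →
      ends (insert v G) ⊆ insert v ((ends G).erase y) → pot (insert v G) ≤ pot G := by
    intro y hy hny hsub
    have h1 : pot (insert v G) ≤ ((ends G).erase y).card + 1 :=
      le_trans (Finset.card_le_card hsub) (Finset.card_insert_le _ _)
    have h2 : ((ends G).erase y).card = (ends G).card - 1 := Finset.card_erase_of_mem hy
    have h3 : 1 ≤ (ends G).card := Finset.card_pos.2 ⟨y, hy⟩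
    unfold pot at h1 ⊢; omega
  have hgen : ∀ x, x ∈ ends (insert v G) → x ≠ v → x ∈ ends G := by
    intro x hx hne
    rw [mem_ends] at hx
    obtain ⟨hxF, hc⟩ := hx
    rcases Finset.mem_insert.1 hxF with rfl | hxF
    · exact absurd rfl hne
    refine mem_ends.2 ⟨hxF, ?_⟩
    rcases hc with h | h | h
    · exact Or.inl h
    · exact Or.inr (Or.inl (fun hm => h (Finset.mem_insert_of_mem hm)))
    · exact Or.inr (Or.inr (fun hm => h (Finset.mem_insert_of_mem hm)))
  rcases hp with ⟨h1, h2, h3, h4⟩ | ⟨h1, h2, h3, h4⟩ | ⟨h1, h2, h3⟩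
  · -- right extension: v-2, v-1 ∈ G; y := v - 1 leaves ends
    refine key (v-1) (mem_ends.2 ⟨h4, Or.inr (Or.inr (by rw [show v-1+1 = v by omega]; exact hv))⟩) ?_ ?_
    · intro hmem
      rw [mem_ends] at hmem
      rcases hmem.2 with h | h | h
      · omega
      · exact h (by rw [show v-1-1 = v-2 by omega]; exact Finset.mem_insert_of_mem h3)
      · exact h (by rw [show v-1+1 = v by omega]; exact Finset.mem_insert_self _ _)
    · intro x hx
      by_cases hxv : x = v
      · subst hxv; exact Finset.mem_insert_self _ _
      · refine Finset.mem_insert_of_mem (Finset.mem_erase.2 ⟨?_, hgen x hx hxv⟩)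
        intro hxy
        subst hxy
        rw [mem_ends] at hx
        rcases hx.2 with h | h | h
        · omega
        · exact h (by rw [show v-1-1 = v-2 by omega]; exact Finset.mem_insert_of_mem h3)
        · exact h (by rw [show v-1+1 = v by omega]; exact Finset.mem_insert_self _ _)
  · -- middle fill: v-1, v+1 ∈ G; v itself is not an end
    have hvnotend : v ∉ ends (insert v G) := by
      intro hmem
      rw [mem_ends] at hmem
      rcases hmem.2 with h | h | h
      · omega
      · exact h (Finset.mem_insert_of_mem h3)
      · exact h (Finset.mem_insert_of_mem h4)
    have hsub : ends (insert v G) ⊆ ends G := by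
      intro x hx
      by_cases hxv : x = v
      · subst hxv; exact absurd hx hvnotend
      · exact hgen x hx hxv
    exact Finset.card_le_card hsub
  · -- left extension: v+1, v+2 ∈ G; y := v + 1 leaves ends
    refine key (v+1) (mem_ends.2 ⟨h2, Or.inr (Or.inl (by rw [show v+1-1 = v by omega]; exact hv))⟩) ?_ ?_
    · intro hmem
      rw [mem_ends] at hmem
      rcases hmem.2 with h | h | h
      · omega
      · exact h (by rw [show v+1-1 = v by omega]; exact Finset.mem_insert_self _ _)
      · exact h (Finset.mem_insert_of_mem h3)
    · intro x hx
      by_cases hxv : x = v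
      · subst hxv; exact Finset.mem_insert_self _ _
      · refine Finset.mem_insert_of_mem (Finset.mem_erase.2 ⟨?_, hgen x hx hxv⟩)
        intro hxy
        subst hxy
        rw [mem_ends] at hx
        rcases hx.2 with h | h | h
        · omega
        · exact h (by rw [show v+1-1 = v by omega]; exact Finset.mem_insert_self _ _)
        · exact h (Finset.mem_insert_of_mem h3)

lemma pot_union_pat_le {n : ℕ} (F : Finset ℕ) (T : Finset ℕ) (hT : ∀ v ∈ T, pat n F v) :
    pot (F ∪ T) ≤ pot F := by
  classical
  induction T using Finset.induction_on with
  | empty => simp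
  | @insert a T ha ih =>
    have hpa : ∀ v ∈ T, pat n F v := fun v hv => hT v (Finset.mem_insert_of_mem hv)
    have h1 : F ∪ insert a T = insert a (F ∪ T) := by
      ext x
      simp only [Finset.mem_union, Finset.mem_insert]
      tauto
    rw [h1]
    by_cases haM : a ∈ F ∪ T
    · rw [Finset.insert_eq_self.2 haM]
      exact ih hpa
    · exact le_trans
        (pot_insert_pat_le haM (pat_mono Finset.subset_union_left (hT a (Finset.mem_insert_self _ _))))
        (ih hpa)

end TPB
namespace TPB

open Finset FinHypergraph

lemma pot_step_le {n : ℕ} (F : Finset ℕ) : pot ((tightPath n).step F) ≤ pot F := by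
  classical
  have h1 : (tightPath n).step F = F ∪ ((tightPath n).step F \ F) := by
    rw [Finset.union_sdiff_of_subset (subset_step F)]
  rw [h1]
  refine pot_union_pat_le (n := n) F _ ?_
  intro v hv
  rw [Finset.mem_sdiff, mem_step_iff] at hv
  exact hv.1.resolve_left hv.2

lemma pot_state_le {n : ℕ} (us : List ℕ) : pot ((tightPath n).state us) ≤ us.length := by
  induction us using List.reverseRecOn with
  | nil => simp [state_nil, pot, ends]
  | append_singleton vs u ih =>
    rw [state_snoc]
    calc pot (insert u ((tightPath n).step ((tightPath n).state vs)))
        ≤ pot ((tightPath n).step ((tightPath n).state vs)) + 1 := pot_insert_le _ _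
      _ ≤ pot ((tightPath n).state vs) + 1 := by
          have := pot_step_le (n := n) ((tightPath n).state vs)
          omega
      _ ≤ vs.length + 1 := by omega
      _ = (vs ++ [u]).length := by simp

end TPB
namespace TPB

open Finset FinHypergraph

def TRs (F : Finset ℕ) : Finset ℕ := F.filter (fun v => 1 ≤ v ∧ v - 1 ∈ F ∧ v + 1 ∉ F)
def TLs (F : Finset ℕ) : Finset ℕ := F.filter (fun v => (v = 0 ∨ v - 1 ∉ F) ∧ v + 1 ∈ F)
def TSs (F : Finset ℕ) : Finset ℕ := F.filter (fun v => (v = 0 ∨ v - 1 ∉ F) ∧ v + 1 ∉ F)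

lemma mem_TRs {F : Finset ℕ} {v : ℕ} :
    v ∈ TRs F ↔ v ∈ F ∧ 1 ≤ v ∧ v - 1 ∈ F ∧ v + 1 ∉ F := Finset.mem_filter
lemma mem_TLs {F : Finset ℕ} {v : ℕ} :
    v ∈ TLs F ↔ v ∈ F ∧ (v = 0 ∨ v - 1 ∉ F) ∧ v + 1 ∈ F := Finset.mem_filter
lemma mem_TSs {F : Finset ℕ} {v : ℕ} :
    v ∈ TSs F ↔ v ∈ F ∧ (v = 0 ∨ v - 1 ∉ F) ∧ v + 1 ∉ F := Finset.mem_filter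

lemma TL_card_le_TR_card {n : ℕ} {F : Finset ℕ} (hF : F ⊆ Finset.range n) :
    (TLs F).card ≤ (TRs F).card := by
  classical
  set f : ℕ → ℕ := fun v => if h : ∃ k, v + k ∉ F then v + Nat.find h - 1 else 0 with hf
  have hex : ∀ v, ∃ k, v + k ∉ F := by
    intro v
    exact ⟨n, fun hm => by have := Finset.mem_range.1 (hF hm); omega⟩
  have hfval : ∀ v, f v = v + Nat.find (hex v) - 1 := by
    intro v; rw [hf]; simp only; rw [dif_pos (hex v)]
  have hd2 : ∀ v, v ∈ TLs F → 2 ≤ Nat.find (hex v) := by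
    intro v hv
    rw [mem_TLs] at hv
    by_contra h
    interval_cases hfind : Nat.find (hex v)
    · have := Nat.find_spec (hex v); rw [hfind] at this; exact this (by simpa using hv.1)
    · have := Nat.find_spec (hex v); rw [hfind] at this; exact this hv.2.2
  have hmem : ∀ v ∈ TLs F, f v ∈ TRs F := by
    intro v hv
    have hd := hd2 v hv
    have hspec := Nat.find_spec (hex v)
    have hmin : ∀ k, k < Nat.find (hex v) → v + k ∈ F := by
      intro k hk
      by_contra hc
      exact absurd (Nat.find_min' (hex v) hc) (by omega)
    rw [hfval, mem_TRs]
    set d := Nat.find (hex v)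
    refine ⟨?_, by omega, ?_, ?_⟩
    · have := hmin (d-1) (by omega); rwa [show v + d - 1 = v + (d-1) by omega]
    · have := hmin (d-2) (by omega); rwa [show v + d - 1 - 1 = v + (d-2) by omega]
    · rwa [show v + d - 1 + 1 = v + d by omega]
  have hmono : ∀ v v', v ∈ TLs F → v' ∈ TLs F → v < v' → f v < f v' := by
    intro v v' hv hv' hlt
    have hd := hd2 v hv
    have hd' := hd2 v' hv'
    rw [mem_TLs] at hv hv'
    have h1 : v' - 1 ∉ F := by
      rcases hv'.2.1 with h | h
      · omega
      · exact h
    have h2 : v' - 1 ≠ v := fun h => h1 (h ▸ hv.1)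
    have hle : Nat.find (hex v) ≤ v' - 1 - v :=
      Nat.find_min' (hex v) (by rw [show v + (v' - 1 - v) = v' - 1 by omega]; exact h1)
    rw [hfval, hfval]
    omega
  apply Finset.card_le_card_of_injOn f hmem
  intro a ha b hb heq
  rcases lt_trichotomy a b with h | h | h
  · exact absurd heq (Nat.ne_of_lt (hmono a b (by simpa using ha) (by simpa using hb) h))
  · exact h
  · exact absurd heq.symm (Nat.ne_of_lt (hmono b a (by simpa using hb) (by simpa using ha) h))

lemma TR_card_le_TL_card {n : ℕ} {F : Finset ℕ} (hF : F ⊆ Finset.range n) :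
    (TRs F).card ≤ (TLs F).card := by
  classical
  set g : ℕ → ℕ := fun w => if h : ∃ k, w - k ∉ F ∨ w < k then w + 1 - Nat.find h else 0 with hg
  have hex : ∀ w, ∃ k, w - k ∉ F ∨ w < k := fun w => ⟨w + 1, Or.inr (by omega)⟩
  have hgval : ∀ w, g w = w + 1 - Nat.find (hex w) := by
    intro w; rw [hg]; simp only; rw [dif_pos (hex w)]
  have hd2 : ∀ w, w ∈ TRs F → 2 ≤ Nat.find (hex w) := by
    intro w hw
    rw [mem_TRs] at hw
    by_contra h
    interval_cases hfind : Nat.find (hex w)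
    · have := Nat.find_spec (hex w); rw [hfind] at this
      rcases this with h' | h'
      · exact h' (by simpa using hw.1)
      · omega
    · have := Nat.find_spec (hex w); rw [hfind] at this
      rcases this with h' | h'
      · exact h' hw.2.2.1
      · omega
  have hmin : ∀ w k, k < Nat.find (hex w) → w - k ∈ F ∧ k ≤ w := by
    intro w k hk
    by_contra hc
    push_neg at hc
    have hor : w - k ∉ F ∨ w < k := by tauto
    exact absurd (Nat.find_min' (hex w) hor) (by omega)
  have hmem : ∀ w ∈ TRs F, g w ∈ TLs F := by
    intro w hw
    have hd := hd2 w hw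
    have hspec := Nat.find_spec (hex w)
    have hw' := mem_TRs.1 hw
    rw [hgval, mem_TLs]
    set e := Nat.find (hex w) with he
    have hew : e ≤ w + 1 := by
      by_contra hc
      obtain ⟨_, h2⟩ := hmin w (w+1) (by omega)
      omega
    by_cases hcase : e = w + 1
    · have h0 : (0:ℕ) ∈ F := by
        have := (hmin w w (by omega)).1; rwa [Nat.sub_self] at this
      have h1 : (1:ℕ) ∈ F := by
        have := (hmin w (w-1) (by omega)).1
        rwa [show w - (w-1) = 1 by omega] at this
      rw [show w + 1 - e = 0 by omega]
      exact ⟨h0, Or.inl rfl, h1⟩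
    · have hel : e ≤ w := by omega
      have hsp : w - e ∉ F := hspec.resolve_right (by omega)
      have hx1 : w - e + 1 ∈ F := by
        have := (hmin w (e-1) (by omega)).1
        rwa [show w - (e-1) = w - e + 1 by omega] at this
      have hx2 : w - e + 2 ∈ F := by
        have := (hmin w (e-2) (by omega)).1
        rwa [show w - (e-2) = w - e + 2 by omega] at this
      rw [show w + 1 - e = w - e + 1 by omega]
      refine ⟨hx1, Or.inr (by rwa [show w - e + 1 - 1 = w - e by omega]), by
        rwa [show w - e + 1 + 1 = w - e + 2 by omega]⟩
  have hmono : ∀ w w', w ∈ TRs F → w' ∈ TRs F → w < w' → g w < g w' := by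
    intro w w' hw hw' hlt
    have hd := hd2 w hw
    have hd' := hd2 w' hw'
    rw [mem_TRs] at hw hw'
    have h1 : w + 1 ∉ F := hw.2.2.2
    have h2 : w + 1 ≠ w' := by
      intro h
      rw [h] at h1
      exact h1 hw'.1
    have hle : Nat.find (hex w') ≤ w' - (w + 1) :=
      Nat.find_min' (hex w') (Or.inl (by rwa [show w' - (w' - (w+1)) = w + 1 by omega]))
    rw [hgval, hgval]
    omega
  apply Finset.card_le_card_of_injOn g hmem
  intro a ha b hb heq
  rcases lt_trichotomy a b with h | h | h
  · exact absurd heq (Nat.ne_of_lt (hmono a b (by simpa using ha) (by simpa using hb) h))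
  · exact h
  · exact absurd heq.symm (Nat.ne_of_lt (hmono b a (by simpa using hb) (by simpa using ha) h))

end TPB
namespace TPB

open Finset FinHypergraph

def newB (n : ℕ) (F : Finset ℕ) : Finset ℕ :=
  (Finset.range n).filter (fun v => v ∉ F ∧ pat n F v)

lemma step_subset_union_newB {n : ℕ} (F : Finset ℕ) :
    (tightPath n).step F ⊆ F ∪ newB n F := by
  intro v hv
  rw [mem_step_iff] at hv
  rw [Finset.mem_union]
  by_cases hvF : v ∈ F
  · exact Or.inl hvF
  · refine Or.inr ?_
    rcases hv with h | h
    · exact absurd h hvF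
    · refine Finset.mem_filter.2 ⟨Finset.mem_range.2 ?_, hvF, h⟩
      rcases h with ⟨_, h2, _, _⟩ | ⟨_, h2, _, _⟩ | ⟨h2, _, _⟩ <;> omega

lemma card_step_le {n : ℕ} (F : Finset ℕ) :
    ((tightPath n).step F).card ≤ F.card + (newB n F).card :=
  le_trans (Finset.card_le_card (step_subset_union_newB F)) (Finset.card_union_le _ _)

/-- The key counting lemma: the number of newly burned vertices is at most
`2 ⌊pot F / 2⌋`. -/
lemma newB_card_le {n : ℕ} {F : Finset ℕ} (hF : F ⊆ Finset.range n) :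
    (newB n F).card ≤ 2 * (pot F / 2) := by
  classical
  set BRc : ℕ → Prop := fun v => 2 ≤ v ∧ v - 2 ∈ F ∧ v - 1 ∈ F with hBRc
  set BLc : ℕ → Prop := fun v => v + 1 ∈ F ∧ v + 2 ∈ F with hBLc
  set BR := (newB n F).filter BRc with hBR
  set BL := (newB n F).filter (fun v => ¬ BRc v ∧ BLc v) with hBL
  set BM := (newB n F).filter (fun v => ¬ BRc v ∧ ¬ BLc v) with hBM
  -- cardinal split
  have hsplit : (newB n F).card = BR.card + BL.card + BM.card := by
    have e1 := Finset.card_filter_add_card_filter_not (p := BRc) (s := newB n F)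
    have e2 := Finset.card_filter_add_card_filter_not (p := BLc)
      (s := (newB n F).filter (fun v => ¬ BRc v))
    have e3 : ((newB n F).filter (fun v => ¬ BRc v)).filter BLc = BL := by
      rw [hBL, Finset.filter_filter]
    have e4 : ((newB n F).filter (fun v => ¬ BRc v)).filter (fun v => ¬ BLc v) = BM := by
      rw [hBM, Finset.filter_filter]
    rw [e3, e4] at e2
    rw [hBR] at *
    omega
  -- facts about members
  have hmemBR : ∀ v ∈ BR, v ∉ F ∧ 2 ≤ v ∧ v - 2 ∈ F ∧ v - 1 ∈ F := by
    intro v hv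
    rw [hBR, Finset.mem_filter] at hv
    obtain ⟨hvn, hc⟩ := hv
    have := (Finset.mem_filter.1 hvn).2.1
    exact ⟨this, hc⟩
  have hmemBL : ∀ v ∈ BL, v ∉ F ∧ v + 1 ∈ F ∧ v + 2 ∈ F := by
    intro v hv
    rw [hBL, Finset.mem_filter] at hv
    obtain ⟨hvn, hc⟩ := hv
    exact ⟨(Finset.mem_filter.1 hvn).2.1, hc.2⟩
  have hmemBM : ∀ v ∈ BM, v ∉ F ∧ 1 ≤ v ∧ v - 1 ∈ F ∧ v + 1 ∈ F ∧ v + 2 ∉ F ∧ (v = 1 ∨ v - 2 ∉ F) := by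
    intro v hv
    rw [hBM, Finset.mem_filter] at hv
    obtain ⟨hvn, hnr, hnl⟩ := hv
    obtain ⟨hvF, hp⟩ := (Finset.mem_filter.1 hvn).2
    rw [hBRc] at hnr
    rw [hBLc] at hnl
    rcases hp with ⟨h1, h2, h3, h4⟩ | ⟨h1, h2, h3, h4⟩ | ⟨h1, h2, h3⟩
    · exact absurd ⟨h1, h3, h4⟩ hnr
    · refine ⟨hvF, h1, h3, h4, ?_, ?_⟩
      · intro hc; exact hnl ⟨h4, hc⟩
      · by_cases hv1 : v = 1
        · exact Or.inl hv1
        · refine Or.inr (fun hc => hnr ⟨by omega, hc, h3⟩)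
    · exact absurd ⟨h2, h3⟩ hnl
  -- injections
  have hBRcard : BR.card ≤ (TRs F).card := by
    apply Finset.card_le_card_of_injOn (fun v => v - 1)
    · intro v hv
      obtain ⟨h1, h2, h3, h4⟩ := hmemBR v hv
      simp only [Finset.mem_coe, mem_TRs]
      refine ⟨h4, by omega, by rwa [show v - 1 - 1 = v - 2 by omega], by rwa [show v - 1 + 1 = v by omega]⟩
    · intro a ha b hb heq
      have ha' := (hmemBR a ha).2.1
      have hb' := (hmemBR b hb).2.1
      dsimp only at heq
      omega
  have hBLcard : BL.card ≤ (TLs F).card := by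
    apply Finset.card_le_card_of_injOn (fun v => v + 1)
    · intro v hv
      obtain ⟨h1, h2, h3⟩ := hmemBL v hv
      simp only [Finset.mem_coe, mem_TLs]
      exact ⟨h2, Or.inr (by rwa [show v + 1 - 1 = v by omega]), by rwa [show v + 1 + 1 = v + 2 by omega]⟩
    · intro a ha b hb heq
      dsimp only at heq
      omega
  have hBMTS : ∀ v ∈ BM, v - 1 ∈ TSs F ∧ v + 1 ∈ TSs F := by
    intro v hv
    obtain ⟨h1, h2, h3, h4, h5, h6⟩ := hmemBM v hv
    constructor
    · rw [mem_TSs]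
      refine ⟨h3, ?_, by rwa [show v - 1 + 1 = v by omega]⟩
      rcases h6 with h | h
      · exact Or.inl (by omega)
      · exact Or.inr (by rwa [show v - 1 - 1 = v - 2 by omega])
    · rw [mem_TSs]
      exact ⟨h4, Or.inr (by rwa [show v + 1 - 1 = v by omega]), by rwa [show v + 1 + 1 = v + 2 by omega]⟩
  -- main case distinction
  have hTLTR := TL_card_le_TR_card hF
  have hTRTL := TR_card_le_TL_card hF
  have hdisj1 : Disjoint (TRs F) (TLs F) := by
    rw [Finset.disjoint_left]
    intro v hv hv'
    rw [mem_TRs] at hv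
    rw [mem_TLs] at hv'
    rcases hv'.2.1 with h | h
    · omega
    · exact h hv.2.2.1
  have hdisj2 : Disjoint (TRs F ∪ TLs F) (TSs F) := by
    rw [Finset.disjoint_left]
    intro v hv hv'
    rw [mem_TSs] at hv'
    rcases Finset.mem_union.1 hv with h | h
    · rw [mem_TRs] at h
      rcases hv'.2.1 with h' | h'
      · omega
      · exact h' h.2.2.1
    · rw [mem_TLs] at h
      exact hv'.2.2 h.2.2
  have hsubends : TRs F ∪ TLs F ∪ TSs F ⊆ ends F := by
    intro v hv
    rcases Finset.mem_union.1 hv with hv | hv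
    · rcases Finset.mem_union.1 hv with hv | hv
      · rw [mem_TRs] at hv
        exact mem_ends.2 ⟨hv.1, Or.inr (Or.inr hv.2.2.2)⟩
      · rw [mem_TLs] at hv
        refine mem_ends.2 ⟨hv.1, ?_⟩
        rcases hv.2.1 with h | h
        · exact Or.inl h
        · exact Or.inr (Or.inl h)
    · rw [mem_TSs] at hv
      exact mem_ends.2 ⟨hv.1, Or.inr (Or.inr hv.2.2)⟩
  have hsum : (TRs F).card + (TLs F).card + (TSs F).card ≤ pot F := by
    have h1 : (TRs F ∪ TLs F).card = (TRs F).card + (TLs F).card :=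
      Finset.card_union_of_disjoint hdisj1
    have h2 : (TRs F ∪ TLs F ∪ TSs F).card = (TRs F ∪ TLs F).card + (TSs F).card :=
      Finset.card_union_of_disjoint hdisj2
    have h3 := Finset.card_le_card hsubends
    unfold pot
    omega
  by_cases hBMe : BM = ∅
  · -- even case
    rw [hBMe] at hsplit
    simp only [Finset.card_empty] at hsplit
    omega
  · -- BM nonempty: lose one singleton
    obtain ⟨w, hw⟩ := Finset.nonempty_iff_ne_empty.2 hBMe
    have hTSne : (TSs F).Nonempty := ⟨w + 1, (hBMTS w hw).2⟩
    set M := (TSs F).max' hTSne with hM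
    have hBMcard : BM.card ≤ (TSs F).card - 1 := by
      have hsub : BM.image (fun v => v - 1) ⊆ (TSs F).erase M := by
        intro x hx
        rw [Finset.mem_image] at hx
        obtain ⟨v, hv, rfl⟩ := hx
        obtain ⟨hts1, hts2⟩ := hBMTS v hv
        refine Finset.mem_erase.2 ⟨?_, hts1⟩
        have hle := Finset.le_max' (TSs F) (v+1) hts2
        have hv1 := (hmemBM v hv).2.1
        omega
      have hinj : BM.card = (BM.image (fun v => v - 1)).card := by
        rw [Finset.card_image_of_injOn]
        intro a ha b hb heq
        have ha' := (hmemBM a ha).2.1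
        have hb' := (hmemBM b hb).2.1
        dsimp only at heq
        omega
      have h1 := Finset.card_le_card hsub
      have h2 : ((TSs F).erase M).card = (TSs F).card - 1 :=
        Finset.card_erase_of_mem ((TSs F).max'_mem hTSne)
      omega
    have hTSpos : 1 ≤ (TSs F).card := Finset.card_pos.2 hTSne
    omega

end TPB
namespace TPB

open Finset FinHypergraph

lemma sq_step_bound (t : ℕ) : (t^2 + 1)/2 + 2*(t/2) + 1 ≤ ((t+1)^2 + 1)/2 := by
  rcases Nat.even_or_odd' t with ⟨m, rfl | rfl⟩
  · have e1 : (2*m)^2 = 4*(m*m) := by ring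
    have e2 : (2*m+1)^2 = 4*(m*m) + 4*m + 1 := by ring
    rw [e1, e2]
    omega
  · have e1 : (2*m+1)^2 = 4*(m*m) + 4*m + 1 := by ring
    have e2 : (2*m+1+1)^2 = 4*(m*m) + 8*m + 4 := by ring
    rw [e1, e2]
    omega

lemma card_state_le {n : ℕ} (us : List ℕ) (h : ∀ u ∈ us, u < n) :
    ((tightPath n).state us).card ≤ (us.length ^ 2 + 1) / 2 := by
  induction us using List.reverseRecOn with
  | nil => simp [state_nil]
  | append_singleton vs u ih =>
    have hvs : ∀ u ∈ vs, u < n := fun x hx => h x (List.mem_append.2 (Or.inl hx))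
    have hsub : (tightPath n).state vs ⊆ Finset.range n := state_subset_range hvs
    rw [state_snoc]
    set F := (tightPath n).state vs with hF
    set t := vs.length with ht
    have h1 : (insert u ((tightPath n).step F)).card ≤ ((tightPath n).step F).card + 1 :=
      Finset.card_insert_le _ _
    have h2 := card_step_le (n := n) F
    have h3 := newB_card_le (n := n) hsub
    have h4 : pot F ≤ t := pot_state_le vs
    have h5 : (newB n F).card ≤ 2 * (t / 2) := by
      have : pot F / 2 ≤ t / 2 := Nat.div_le_div_right h4
      omega
    have h6 := ih hvs
    have h7 := sq_step_bound t
    have hlen : (vs ++ [u]).length = t + 1 := by simp [ht]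
    rw [hlen]
    omega

/-- Lower bound: any burning sequence for the tight path has length `ℓ` with `2n - 1 ≤ ℓ²`. -/
lemma lower_bound {n : ℕ} (hn : 3 ≤ n) {us : List ℕ}
    (h : (tightPath n).IsBurningSeq us) : 2 * n ≤ us.length ^ 2 + 1 := by
  obtain ⟨hvalid, hfinal⟩ := h
  have hmem : ∀ u ∈ us, u < n := by
    intro u hu
    obtain ⟨i, hi⟩ := List.mem_iff_get.1 hu
    have := (hvalid i).1
    rw [hi] at this
    simpa [verts_eq, Finset.mem_range] using this
  have h1 := card_state_le us hmem
  rw [hfinal] at h1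
  rw [verts_eq, Finset.card_range] at h1
  omega

end TPB
namespace TPB

open Finset FinHypergraph

/-- Validity of a source sequence: each source is a vertex not already burned. -/
def Valid (n : ℕ) (us : List ℕ) : Prop :=
  ∀ i : Fin us.length, us.get i ∈ (tightPath n).verts ∧
    us.get i ∉ (tightPath n).state (us.take i.1)

lemma valid_mem_lt {n : ℕ} {us : List ℕ} (h : Valid n us) : ∀ u ∈ us, u < n := by
  intro u hu
  obtain ⟨i, hi⟩ := List.mem_iff_get.1 hu
  have := (h i).1
  rw [hi] at this
  simpa [verts_eq, Finset.mem_range] using this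

lemma valid_snoc {n : ℕ} {us : List ℕ} {u : ℕ} (h : Valid n us) (h1 : u < n)
    (h2 : u ∉ (tightPath n).state us) : Valid n (us ++ [u]) := by
  intro i
  have hlen : (us ++ [u]).length = us.length + 1 := by simp
  by_cases hi : i.1 < us.length
  · have hget : (us ++ [u]).get i = us.get ⟨i.1, hi⟩ := by
      rw [List.get_eq_getElem, List.get_eq_getElem, List.getElem_append_left]
    have htake : (us ++ [u]).take i.1 = us.take i.1 := by
      rw [List.take_append, show i.1 - us.length = 0 by omega,
        List.take_zero, List.append_nil]
    rw [hget, htake]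
    exact h ⟨i.1, hi⟩
  · have hi' : i.1 = us.length := by have := i.2; omega
    have hget : (us ++ [u]).get i = u := by
      rw [List.get_eq_getElem]
      exact List.getElem_concat_length (l := us) (a := u) (i := i.1) hi' (by simp; omega)
    have htake : (us ++ [u]).take i.1 = us := by
      rw [hi', List.take_left]
    rw [hget, htake]
    exact ⟨by rw [verts_eq]; exact Finset.mem_range.2 h1, h2⟩

/-- Spread lemma: a pair of adjacent burned vertices spreads distance `k` in `k` steps. -/
lemma spread {n : ℕ} (k : ℕ) (c : ℕ) (F : Finset ℕ) (hF : F ⊆ Finset.range n)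
    (h1 : c ∈ F) (h2 : c + 1 ∈ F) :
    ∀ v, v < n → c ≤ v + k → v ≤ c + 1 + k → v ∈ (tightPath n).step^[k] F := by
  induction k generalizing c F with
  | zero =>
    intro v hv hl hr
    simp only [Function.iterate_zero, id]
    have : v = c ∨ v = c + 1 := by omega
    rcases this with rfl | rfl <;> assumption
  | succ k ih =>
    intro v hv hl hr
    have hc1n : c + 1 < n := Finset.mem_range.1 (hF h2)
    have hF' : (tightPath n).step F ⊆ Finset.range n := step_subset_range hF
    have hc : c ∈ (tightPath n).step F := subset_step F h1
    have hc1 : c + 1 ∈ (tightPath n).step F := subset_step F h2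
    rw [Function.iterate_succ_apply]
    by_cases hcase1 : c ≤ v + k ∧ v ≤ c + 1 + k
    · exact ih c _ hF' hc hc1 v hv hcase1.1 hcase1.2
    · by_cases hcase2 : v = c + 2 + k
      · -- need the pair (c+1, c+2)
        have hc2n : c + 2 < n := by omega
        have hc2 : c + 2 ∈ (tightPath n).step F := by
          rw [mem_step_iff]
          refine Or.inr (Or.inl ⟨by omega, by omega, ?_, ?_⟩)
          · rw [show c + 2 - 2 = c by omega]; exact h1
          · rw [show c + 2 - 1 = c + 1 by omega]; exact h2
        exact ih (c+1) _ hF' hc1 hc2 v hv (by omega) (by omega)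
      · -- v = c - (k+1), need the pair (c-1, c)
        have hvc : v + k + 1 = c := by omega
        have hcpos : 1 ≤ c := by omega
        have hcm : c - 1 ∈ (tightPath n).step F := by
          rw [mem_step_iff]
          refine Or.inr (Or.inr (Or.inr ⟨by omega, ?_, ?_⟩))
          · rw [show c - 1 + 1 = c by omega]; exact h1
          · rw [show c - 1 + 2 = c + 1 by omega]; exact h2
        have hcm1 : c - 1 + 1 ∈ (tightPath n).step F := by
          rw [show c - 1 + 1 = c by omega]; exact hc
        exact ih (c-1) _ hF' hcm hcm1 v hv (by omega) (by omega)

end TPB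
namespace TPB

open Finset FinHypergraph

/-- Ball lemma: anything burned is within distance `len - 1 - i` of the `i`-th source. -/
lemma ball_bound {n : ℕ} (us : List ℕ) :
    ∀ v ∈ (tightPath n).state us, ∃ i, ∃ h : i < us.length,
      us.get ⟨i, h⟩ ≤ v + (us.length - 1 - i) ∧ v ≤ us.get ⟨i, h⟩ + (us.length - 1 - i) := by
  induction us using List.reverseRecOn with
  | nil => intro v hv; simp [state_nil] at hv
  | append_singleton vs u ih =>
    intro v hv
    rw [state_snoc] at hv
    have hlen : (vs ++ [u]).length = vs.length + 1 := by simp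
    have hgetlast : ∀ h : vs.length < (vs ++ [u]).length, (vs ++ [u]).get ⟨vs.length, h⟩ = u :=
      fun h => List.getElem_concat_length (l := vs) (a := u) (i := vs.length) rfl h
    have hgetold : ∀ i (h : i < vs.length), ∀ h2 : i < (vs ++ [u]).length,
        (vs ++ [u]).get ⟨i, h2⟩ = vs.get ⟨i, h⟩ := by
      intro i h h2
      rw [List.get_eq_getElem, List.get_eq_getElem, List.getElem_append_left]
    have hold : ∀ w ∈ (tightPath n).state vs, ∃ i, ∃ h : i < (vs ++ [u]).length,
        (vs ++ [u]).get ⟨i, h⟩ + 1 ≤ w + ((vs ++ [u]).length - 1 - i) ∧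
        w + 1 ≤ (vs ++ [u]).get ⟨i, h⟩ + ((vs ++ [u]).length - 1 - i) := by
      intro w hw
      obtain ⟨i, h, hb1, hb2⟩ := ih w hw
      refine ⟨i, by omega, ?_⟩
      rw [hgetold i h]
      omega
    rcases Finset.mem_insert.1 hv with rfl | hv
    · refine ⟨vs.length, by omega, ?_⟩
      rw [hgetlast]
      omega
    · -- v ∈ step (state vs)
      rw [mem_step_iff] at hv
      rcases hv with hv | hp
      · obtain ⟨i, h, hb1, hb2⟩ := hold v hv
        exact ⟨i, h, by omega, by omega⟩
      · -- v has a neighbour in state vs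
        have hnb : ∃ w ∈ (tightPath n).state vs, w ≤ v + 1 ∧ v ≤ w + 1 := by
          rcases hp with ⟨h1, h2, h3, h4⟩ | ⟨h1, h2, h3, h4⟩ | ⟨h1, h2, h3⟩
          · exact ⟨v - 1, h4, by omega, by omega⟩
          · exact ⟨v - 1, h3, by omega, by omega⟩
          · exact ⟨v + 1, h2, by omega, by omega⟩
        obtain ⟨w, hw, hw1, hw2⟩ := hnb
        obtain ⟨i, h, hb1, hb2⟩ := hold w hw
        exact ⟨i, h, by omega, by omega⟩

/-- Padding: we can always extend a valid sequence by (at most) k further sources,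
either burning everything or doing k full propagation rounds. -/
lemma pad {n : ℕ} (k : ℕ) : ∀ us : List ℕ, Valid n us →
    ∃ vs : List ℕ, Valid n (us ++ vs) ∧ vs.length ≤ k ∧
      ((tightPath n).state (us ++ vs) = Finset.range n ∨
        (vs.length = k ∧ (tightPath n).step^[k] ((tightPath n).state us) ⊆ (tightPath n).state (us ++ vs))) := by
  induction k with
  | zero =>
    intro us h
    exact ⟨[], by simpa using h, by simp, Or.inr ⟨rfl, by simp⟩⟩
  | succ k ih =>
    intro us h
    have hsub : (tightPath n).state us ⊆ Finset.range n := state_subset_range (valid_mem_lt h)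
    rcases Finset.eq_empty_or_nonempty (Finset.range n \ (tightPath n).state us) with he | hne
    · refine ⟨[], by simpa using h, by simp, Or.inl ?_⟩
      rw [List.append_nil]
      apply Finset.Subset.antisymm hsub
      intro x hx
      by_contra hc
      have : x ∈ Finset.range n \ (tightPath n).state us := Finset.mem_sdiff.2 ⟨hx, hc⟩
      rw [he] at this
      exact absurd this (Finset.notMem_empty x)
    · set u := (Finset.range n \ (tightPath n).state us).min' hne with hu
      have humem := (Finset.range n \ (tightPath n).state us).min'_mem hne
      rw [Finset.mem_sdiff] at humem
      have hval' : Valid n (us ++ [u]) :=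
        valid_snoc h (Finset.mem_range.1 humem.1) humem.2
      obtain ⟨vs, hv1, hv2, hv3⟩ := ih (us ++ [u]) hval'
      refine ⟨[u] ++ vs, by rwa [← List.append_assoc], by simp; omega, ?_⟩
      rcases hv3 with hv3 | ⟨hv3, hv4⟩
      · exact Or.inl (by rwa [← List.append_assoc])
      · refine Or.inr ⟨by simp [hv3], ?_⟩
        rw [← List.append_assoc]
        refine subset_trans ?_ hv4
        rw [Function.iterate_succ_apply]
        apply stepIter_mono
        rw [state_snoc]
        exact (Finset.subset_insert _ _)
  
end TPB
namespace TPB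

open Finset FinHypergraph

/-- Block sizes for the pair construction. -/
def S (b j : ℕ) : ℕ := 2*j*(b-j)

/-- Position of the `j`-th source pair. -/
def sig (n b j : ℕ) : ℕ := (n - S b j) + (b - 2*j)

lemma S_diff {b j j' : ℕ} (h1 : j' ≤ j) (h2 : j + j' ≤ b) :
    S b j = S b j' + 2*((j-j')*(b-(j+j'))) := by
  unfold S
  zify [h1, (by omega : j ≤ b), (by omega : j' ≤ b), h2]
  ring

lemma S_mono' {b j j' : ℕ} (h1 : j' < j) (h2 : j + j' < b) :
    S b j' + 2*(j - j') ≤ S b j := by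
  have hd := S_diff (b := b) (le_of_lt h1) (by omega)
  have h3 : (j - j') ≤ (j-j')*(b-(j+j')) :=
    le_mul_of_one_le_right (Nat.zero_le _) (by omega)
  omega

lemma S_mono_le {b j j' : ℕ} (h1 : j' ≤ j) (h2 : j + j' ≤ b) :
    S b j' ≤ S b j := by
  have hd := S_diff h1 h2
  omega

lemma S_succ_diff {b j : ℕ} (h : 1 ≤ j) (h2 : 2*j ≤ b) :
    S b j = S b (j-1) + 2*(b - 2*j) + 2 := by
  have hd := S_diff (show j - 1 ≤ j by omega) (show j + (j-1) ≤ b by omega)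
  have he : j - (j-1) = 1 := by omega
  rw [he] at hd
  have he2 : b - (j + (j-1)) = b - 2*j + 1 := by omega
  rw [he2] at hd
  omega

end TPB
namespace TPB

open Finset FinHypergraph

lemma upper_bound {n b : ℕ} (hn : 3 ≤ n) (hb3 : 3 ≤ b)
    (hbu : 2*n ≤ b^2 + 1) (hbl : (b-1)^2 + 1 < 2*n) :
    ∃ us : List ℕ, (tightPath n).IsBurningSeq us ∧ us.length ≤ b := by
  classical
  -- b ≤ n
  have hbn : b ≤ n := by
    by_contra hc
    have h1 : n ≤ b - 1 := by omega
    have h2 : n*n ≤ (b-1)*(b-1) := Nat.mul_le_mul h1 h1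
    have h3 : 3*n ≤ n*n := Nat.mul_le_mul_right n hn
    have h4 : (b-1)^2 = (b-1)*(b-1) := sq (b-1)
    omega
  -- witness for jj
  have hwit : n ≤ S b (b/2) + b % 2 := by
    rcases Nat.even_or_odd' b with ⟨m, rfl | rfl⟩
    · have e1 : (2*m)^2 = 4*(m*m) := by ring
      have e2 : S (2*m) (2*m/2) = 2*(m*m) := by
        unfold S
        rw [show 2*m/2 = m by omega, show 2*m - m = m by omega]
        ring
      omega
    · have e1 : (2*m+1)^2 = 4*(m*m) + 4*m + 1 := by ring
      have e2 : S (2*m+1) ((2*m+1)/2) = 2*(m*m) + 2*m := by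
        unfold S
        rw [show (2*m+1)/2 = m by omega, show 2*m+1 - m = m+1 by omega]
        ring
      omega
  have hex : ∃ j, n ≤ S b j + 1 := ⟨b/2, by omega⟩
  set jj := Nat.find hex with hjj
  have hjspec : n ≤ S b jj + 1 := Nat.find_spec hex
  have hjle : jj ≤ b/2 := Nat.find_min' hex (by omega)
  have hj1 : 1 ≤ jj := by
    rcases Nat.eq_zero_or_pos jj with h | h
    · exfalso
      have : S b 0 = 0 := by unfold S; ring
      rw [h] at hjspec
      omega
    · exact h
  have hj2 : ∀ j' < jj, S b j' + 2 ≤ n := by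
    intro j' hj'
    have := Nat.find_min hex hj'
    omega
  have hjb : 2*jj ≤ b := by omega
  -- source separation
  have hsep : ∀ j' j, 1 ≤ j' → j' < j → j ≤ jj → sig n b j + 2*(j - j') + 2 ≤ sig n b j' := by
    intro j' j h1 h2 h3
    have hS2 : S b j' + 2*(j - j') ≤ S b j := S_mono' h2 (by omega)
    have hgen : S b j' + 2 ≤ n := hj2 j' (by omega)
    unfold sig
    omega
  -- sources are legal vertices
  have hsig_lt : ∀ j, 1 ≤ j → j ≤ jj → sig n b j + 1 < n := by
    intro j h1 h2
    have hS : S b j = 2*(j*(b-j)) := by unfold S; ring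
    have hmul : b - j ≤ j*(b-j) := le_mul_of_one_le_left (Nat.zero_le _) h1
    unfold sig
    omega
  -- the planned pair sources
  set f : ℕ → ℕ := fun i => sig n b (i/2 + 1) + i % 2 with hf
  set us0 : List ℕ := (List.range (2*jj)).map f with hus0
  have hus0len : us0.length = 2*jj := by simp [hus0]
  have hus0take : ∀ i, i ≤ 2*jj → us0.take i = (List.range i).map f := by
    intro i hi
    rw [hus0, ← List.map_take, List.take_range, min_eq_left hi]
  have hus0get : ∀ i (h : i < us0.length), us0.get ⟨i, h⟩ = f i := by
    intro i h
    rw [List.get_eq_getElem]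
    simp only [hus0, List.getElem_map, List.getElem_range]
  have hflt : ∀ i, i < 2*jj → f i < n := by
    intro i h
    have h1 := hsig_lt (i/2+1) (by omega) (by omega)
    have h2 : f i = sig n b (i/2+1) + i % 2 := by simp only [hf]
    omega
  -- validity of the pair sources
  have hval0 : Valid n us0 := by
    intro i
    have hivlt : i.1 < 2*jj := by have := i.2; omega
    constructor
    · rw [verts_eq, hus0get i.1 i.2]
      exact Finset.mem_range.2 (hflt i.1 hivlt)
    · rw [hus0get i.1 i.2]
      intro hc
      rw [hus0take i.1 (by omega)] at hc
      obtain ⟨i', hi'len, hb1, hb2⟩ := ball_bound ((List.range i.1).map f) (f i.1) hc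
      have hlen' : ((List.range i.1).map f).length = i.1 := by simp
      have hi'' : i' < i.1 := by rw [hlen'] at hi'len; exact hi'len
      have hget' : ((List.range i.1).map f).get ⟨i', hi'len⟩ = f i' := by
        rw [List.get_eq_getElem]
        simp only [List.getElem_map, List.getElem_range]
      rw [hget', hlen'] at hb1 hb2
      have hfi : f i.1 = sig n b (i.1/2+1) + i.1 % 2 := by simp only [hf]
      have hfi' : f i' = sig n b (i'/2+1) + i' % 2 := by simp only [hf]
      rcases Nat.lt_or_ge (i'/2) (i.1/2) with hlt | hge
      · have hs := hsep (i'/2+1) (i.1/2+1) (by omega) (by omega) (by omega)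
        omega
      · have hdd : i'/2 = i.1/2 := by omega
        rw [hdd] at hfi'
        omega
  -- extra source for the uncovered case
  set e : ℕ := if n ≤ S b jj then 0 else 1 with he
  set extra : List ℕ := if n ≤ S b jj then [] else [0] with hextra
  have hextralen : extra.length = e := by
    rw [hextra, he]
    split <;> simp
  have hodd : ¬ (n ≤ S b jj) → 2*jj + 1 ≤ b := by
    intro hnc
    by_contra hc
    have hbe : b = 2*jj := by omega
    have hjhalf : jj = b/2 := by omega
    have hbmod : b % 2 = 0 := by omega
    rw [← hjhalf] at hwit
    omega
  have hzero : ¬ (n ≤ S b jj) → (0 : ℕ) ∉ (tightPath n).state us0 := by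
    intro hnc hc
    obtain ⟨i', hi'len, hb1, hb2⟩ := ball_bound us0 0 hc
    have hi'' : i' < 2*jj := by rw [hus0len] at hi'len; exact hi'len
    have hget' := hus0get i' hi'len
    rw [hget', hus0len] at hb1 hb2
    have hfi' : f i' = sig n b (i'/2+1) + i' % 2 := by simp only [hf]
    have hSle : S b (i'/2+1) ≤ S b jj := S_mono_le (by omega) (by omega)
    have hsg : sig n b (i'/2+1) = (n - S b (i'/2+1)) + (b - 2*(i'/2+1)) := rfl
    have hb21 : 2*jj + 1 ≤ b := hodd hnc
    omega
  have hval1 : Valid n (us0 ++ extra) := by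
    rw [hextra]
    split
    · simpa using hval0
    · rename_i hnc
      exact valid_snoc hval0 (by omega) (hzero hnc)
  have hlen1 : (us0 ++ extra).length = 2*jj + e := by
    rw [List.length_append, hus0len, hextralen]
  -- padding
  obtain ⟨vs, hv1, hv2, hv3⟩ := pad (b - (2*jj + e)) (us0 ++ extra) hval1
  have hlenf : ((us0 ++ extra) ++ vs).length ≤ b := by
    rw [List.length_append, hlen1]
    by_cases hcov : n ≤ S b jj
    · have he0 : e = 0 := by rw [he, if_pos hcov]
      omega
    · have he0 : e = 1 := by rw [he, if_neg hcov]
      have := hodd hcov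
      omega
  refine ⟨(us0 ++ extra) ++ vs, ⟨hv1, ?_⟩, hlenf⟩
  -- it remains to show the final state is everything
  set usf := (us0 ++ extra) ++ vs with husf
  have husfsub : (tightPath n).state usf ⊆ Finset.range n :=
    state_subset_range (valid_mem_lt hv1)
  rcases hv3 with hdone | ⟨hvlen, hvsub⟩
  · rw [verts_eq]; exact hdone
  · rw [verts_eq]
    apply Finset.Subset.antisymm husfsub
    intro v hv
    have hvn : v < n := Finset.mem_range.1 hv
    -- the uncovered vertex 0
    by_cases hzcase : ¬ (n ≤ S b jj) ∧ v = 0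
    · obtain ⟨hnc, rfl⟩ := hzcase
      have h0mem : (0:ℕ) ∈ us0 ++ extra := by
        rw [hextra]
        simp only [List.mem_append]
        right
        split
        · rename_i hcon; exact absurd hcon hnc
        · simp
      exact state_subset_state_append _ vs (mem_state_of_mem h0mem)
    · -- v is covered by some pair
      have hvge : n ≤ S b jj + v := by
        by_cases hcov : n ≤ S b jj
        · omega
        · have hveq : 1 ≤ v := by
            rcases Nat.eq_zero_or_pos v with h | h
            · exact absurd ⟨hcov, h.symm ▸ rfl⟩ hzcase
            · exact h
          omega
      have hexv : ∃ j, n ≤ S b j + v := ⟨jj, hvge⟩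
      set jv := Nat.find hexv with hjv
      have hjvspec : n ≤ S b jv + v := Nat.find_spec hexv
      have hjvle : jv ≤ jj := Nat.find_min' hexv hvge
      have hjv1 : 1 ≤ jv := by
        rcases Nat.eq_zero_or_pos jv with h | h
        · exfalso
          have hS0 : S b 0 = 0 := by unfold S; ring
          rw [h, hS0] at hjvspec
          omega
        · exact h
      have hjvmin : S b (jv - 1) + v + 1 ≤ n := by
        have := Nat.find_min hexv (show jv - 1 < jv by omega)
        omega
      -- spread from pair jv
      have hpairmem : sig n b jv ∈ (tightPath n).state (us0.take (2*jv)) ∧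
          sig n b jv + 1 ∈ (tightPath n).state (us0.take (2*jv)) := by
        rw [hus0take (2*jv) (by omega)]
        constructor
        · apply mem_state_of_mem
          rw [List.mem_map]
          refine ⟨2*jv - 2, by simp; omega, ?_⟩
          simp only [hf]
          rw [show (2*jv-2)/2 = jv - 1 by omega, show (2*jv-2) % 2 = 0 by omega,
            show jv - 1 + 1 = jv by omega, Nat.add_zero]
        · apply mem_state_of_mem
          rw [List.mem_map]
          refine ⟨2*jv - 1, by simp; omega, ?_⟩
          simp only [hf]
          rw [show (2*jv-1)/2 = jv - 1 by omega, show (2*jv-1) % 2 = 1 by omega,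
            show jv - 1 + 1 = jv by omega]
      have htakesub : (tightPath n).state (us0.take (2*jv)) ⊆ Finset.range n := by
        apply state_subset_range
        intro u hu
        rw [hus0take (2*jv) (by omega), List.mem_map] at hu
        obtain ⟨i0, hi0, rfl⟩ := hu
        simp only [List.mem_range] at hi0
        exact hflt i0 (by omega)
      have hSdiffv := S_succ_diff (b := b) hjv1 (by omega)
      have hspread : v ∈ (tightPath n).step^[b - 2*jv] ((tightPath n).state (us0.take (2*jv))) := by
        apply spread (b - 2*jv) (sig n b jv) _ htakesub hpairmem.1 hpairmem.2 v hvn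
        · -- lower bound
          have : sig n b jv = (n - S b jv) + (b - 2*jv) := rfl
          omega
        · -- upper bound
          have hs : sig n b jv = (n - S b jv) + (b - 2*jv) := rfl
          by_cases hcl : n ≤ S b jv
          · -- clamped: only possible for jv with S b jv ≥ n
            omega
          · omega
      -- assemble the iterates
      have hchain : (tightPath n).step^[(2*jj - 2*jv) + e] ((tightPath n).state (us0.take (2*jv)))
          ⊆ (tightPath n).state (us0 ++ extra) := by
        have h1 := stepIter_subset_state_append (n := n) (us0.take (2*jv)) (us0.drop (2*jv) ++ extra)
        rw [← List.append_assoc, List.take_append_drop] at h1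
        have h2 : (us0.drop (2*jv) ++ extra).length = (2*jj - 2*jv) + e := by
          rw [List.length_append, List.length_drop, hus0len, hextralen]
        rw [h2] at h1
        exact h1
      have hfinal : (tightPath n).step^[(b - (2*jj + e)) + ((2*jj - 2*jv) + e)]
          ((tightPath n).state (us0.take (2*jv))) ⊆ (tightPath n).state usf := by
        rw [Function.iterate_add_apply]
        exact subset_trans (stepIter_mono _ hchain) hvsub
      have hadd : (b - (2*jj + e)) + ((2*jj - 2*jv) + e) = b - 2*jv := by
        have he1 : e ≤ 1 := by rw [he]; split <;> omega
        have hb21 : ¬ (n ≤ S b jj) → 2*jj + 1 ≤ b := hodd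
        by_cases hcov : n ≤ S b jj
        · have : e = 0 := by rw [he, if_pos hcov]
          omega
        · have : e = 1 := by rw [he, if_neg hcov]
          have := hb21 hcov
          omega
      rw [hadd] at hfinal
      exact hfinal hspread

end TPB
theorem burn_tightPath (n : ℕ) (hn : 3 ≤ n) :
    (tightPath n).burn = ⌈Real.sqrt (2 * (n : ℝ) - 1)⌉₊ := by
  have hcast : ((2*n - 1 : ℕ) : ℝ) = 2 * (n : ℝ) - 1 := by
    have h1 : (1:ℕ) ≤ 2*n := by omega
    push_cast [Nat.cast_sub h1]
    ring
  set x : ℝ := 2 * (n : ℝ) - 1 with hx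
  have hxpos : 0 < x := by
    rw [hx]
    have : (3:ℝ) ≤ (n:ℝ) := by exact_mod_cast hn
    linarith
  set B := ⌈Real.sqrt x⌉₊ with hB
  have hBpos : 0 < B := Nat.ceil_pos.mpr (Real.sqrt_pos.mpr hxpos)
  -- upper bound facts about B
  have hup : 2*n ≤ B^2 + 1 := by
    have h1 : Real.sqrt x ≤ (B:ℝ) := Nat.le_ceil _
    have h2 : x ≤ (B:ℝ)^2 := by
      nlinarith [Real.sq_sqrt (le_of_lt hxpos), Real.sqrt_nonneg x]
    have h3 : ((2*n - 1 : ℕ) : ℝ) ≤ ((B^2 : ℕ) : ℝ) := by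
      rw [hcast]
      push_cast
      exact h2
    have h4 : 2*n - 1 ≤ B^2 := by exact_mod_cast h3
    omega
  have hlow : (B-1)^2 + 1 < 2*n := by
    have h1 : ((B - 1 : ℕ) : ℝ) < Real.sqrt x := by
      exact Nat.lt_ceil.mp (by omega)
    have h2 : ((B-1:ℕ):ℝ)^2 < x := by
      nlinarith [Real.sq_sqrt (le_of_lt hxpos), Real.sqrt_nonneg x,
        Nat.cast_nonneg (α := ℝ) (B-1)]
    have h3 : (((B-1)^2 : ℕ) : ℝ) < ((2*n - 1 : ℕ) : ℝ) := by
      rw [hcast]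
      push_cast
      exact h2
    have h4 : (B-1)^2 < 2*n - 1 := by exact_mod_cast h3
    omega
  have hB3 : 3 ≤ B := by
    by_contra hc
    have h1 : B ≤ 2 := by omega
    have h2 : B^2 ≤ 2^2 := Nat.pow_le_pow_left h1 2
    omega
  obtain ⟨us, hseq, hlen⟩ := TPB.upper_bound hn hB3 hup hlow
  unfold FinHypergraph.burn
  have hmem : us.length ∈ {m | ∃ ws : List ℕ, (tightPath n).IsBurningSeq ws ∧ ws.length = m} :=
    ⟨us, hseq, rfl⟩
  apply le_antisymm
  · exact le_trans (Nat.sInf_le hmem) hlen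
  · apply le_csInf ⟨us.length, hmem⟩
    rintro m ⟨ws, hws, rfl⟩
    have h1 := TPB.lower_bound hn hws
    have h2 : 2*n - 1 ≤ ws.length^2 := by omega
    rw [hB]
    apply Nat.ceil_le.mpr
    have h3 : x ≤ ((ws.length^2 : ℕ) : ℝ) := by
      rw [← hcast]
      exact_mod_cast h2
    have h4 : x ≤ ((ws.length : ℕ) : ℝ)^2 := by
      push_cast at h3 ⊢
      exact h3
    calc Real.sqrt x ≤ Real.sqrt (((ws.length : ℕ) : ℝ)^2) := Real.sqrt_le_sqrt h4
      _ = ((ws.length : ℕ) : ℝ) := Real.sqrt_sq (Nat.cast_nonneg _)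
end

section
/- For every k ∈ ℕ there exists a hypergraph H with b(H) − b_L(H) > k, and a hypergraph H' with b(H')/b_L(H') > k. -/
open Finset

/-- A hypergraph: a finite vertex set together with a finite set of edges,
each edge being a subset of the vertex set. -/
structure BurnHypergraph (α : Type*) [DecidableEq α] where
  verts : Finset α
  edges : Finset (Finset α)
  edges_sub : ∀ e ∈ edges, e ⊆ verts

namespace BurnHypergraph

variable {α : Type*} [DecidableEq α]

/-- `Burns H S v`: starting from the initially burned set `S`, the vertex `v`
eventually burns under the propagation rule: an unburned vertex `v` catches fire
when some non-singleton edge `e ∋ v` has all of `e \ {v}` burned. -/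
inductive Burns (H : BurnHypergraph α) (S : Finset α) : α → Prop
  | init {v : α} : v ∈ S → Burns H S v
  | prop {v : α} {e : Finset α} : v ∈ H.verts → e ∈ H.edges → 2 ≤ e.card → v ∈ e →
      (∀ u ∈ e, u ≠ v → Burns H S u) → Burns H S v

/-- A lazy burning set: a set of vertices whose propagation closure is all of `V(H)`. -/
def IsLazySet (H : BurnHypergraph α) (S : Finset α) : Prop :=
  S ⊆ H.verts ∧ ∀ v ∈ H.verts, H.Burns S v

/-- The lazy burning number: the minimum size of a lazy burning set. -/
noncomputable def lazyBurn (H : BurnHypergraph α) : ℕ :=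
  sInf {n | ∃ S : Finset α, H.IsLazySet S ∧ S.card = n}

/-- One round of fire propagation applied to the burned set `F`. -/
noncomputable def step (H : BurnHypergraph α) (F : Finset α) : Finset α :=
  F ∪ H.verts.filter (fun v => ∃ e ∈ H.edges, 2 ≤ e.card ∧ v ∈ e ∧ e \ {v} ⊆ F)

/-- The set of burned vertices after playing the sources `us` in order
(each round: propagation happens, and simultaneously the next source is burned). -/
noncomputable def state (H : BurnHypergraph α) (us : List α) : Finset α :=
  us.foldl (fun F u => insert u (H.step F)) ∅

/-- `us` is a burning sequence for `H`: each source is a vertex that was not burned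
at the end of the previous round, and after the final round all of `V(H)` is burned. -/
def IsBurningSeq (H : BurnHypergraph α) (us : List α) : Prop :=
  (∀ i : Fin us.length, us.get i ∈ H.verts ∧ us.get i ∉ H.state (us.take i.1)) ∧
  H.state us = H.verts

/-- The (round-based) burning number: the minimum length of a burning sequence. -/
noncomputable def burn (H : BurnHypergraph α) : ℕ :=
  sInf {n | ∃ us : List α, H.IsBurningSeq us ∧ us.length = n}

/-- An independent set of vertices: one containing no edge of `H`. -/
def IsIndep (H : BurnHypergraph α) (X : Finset α) : Prop :=
  X ⊆ H.verts ∧ ∀ e ∈ H.edges, ¬ e ⊆ X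

/-- The independence number `α(H)`. -/
noncomputable def indepNum (H : BurnHypergraph α) : ℕ :=
  sSup {n | ∃ X : Finset α, H.IsIndep X ∧ X.card = n}

/-- Two vertices are adjacent if they lie in a common edge. -/
def Adj (H : BurnHypergraph α) (u v : α) : Prop :=
  ∃ e ∈ H.edges, u ∈ e ∧ v ∈ e

/-- Two vertices are connected if they are joined by a path (alternating
vertices and edges). -/
def Conn (H : BurnHypergraph α) (u v : α) : Prop :=
  Relation.ReflTransGen H.Adj u v

/-- A hypergraph is connected if every two vertices are connected. -/
def IsConnected (H : BurnHypergraph α) : Prop :=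
  ∀ u ∈ H.verts, ∀ v ∈ H.verts, H.Conn u v

/-- `G : Fin k → BurnHypergraph α` is the family of connected components of `H`:
the vertex sets are nonempty, partition `V(H)`, each component carries exactly the
edges of `H` lying inside it, each component is connected, and components are
maximal with respect to connectivity. -/
def IsComponents (H : BurnHypergraph α) {k : ℕ} (G : Fin k → BurnHypergraph α) : Prop :=
  (∀ i, (G i).verts.Nonempty) ∧
  (∀ i, (G i).verts ⊆ H.verts) ∧
  (∀ i, (G i).edges = H.edges.filter (fun e => e ⊆ (G i).verts)) ∧
  (∀ v ∈ H.verts, ∃! i, v ∈ (G i).verts) ∧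
  (∀ i, ∀ u ∈ (G i).verts, ∀ v ∈ (G i).verts, H.Conn u v) ∧
  (∀ i, ∀ u ∈ (G i).verts, ∀ v ∈ H.verts, H.Conn u v → v ∈ (G i).verts)

end BurnHypergraph

namespace BurnHypergraph
variable {α : Type*} [DecidableEq α] (H : BurnHypergraph α)

lemma subset_step (F : Finset α) : F ⊆ H.step F := subset_union_left

lemma step_subset {F : Finset α} (hF : F ⊆ H.verts) : H.step F ⊆ H.verts :=
  union_subset hF (filter_subset _ _)

lemma state_append (us : List α) (v : α) :
    H.state (us ++ [v]) = insert v (H.step (H.state us)) := by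
  simp [state, List.foldl_append]

lemma state_subset_verts {us : List α} (h : ∀ u ∈ us, u ∈ H.verts) :
    H.state us ⊆ H.verts := by
  induction us using List.reverseRecOn with
  | nil => simp [state]
  | append_singleton us v ih =>
    rw [state_append]
    refine insert_subset (h v (by simp)) (H.step_subset (ih fun u hu => h u (by simp [hu])))

lemma state_mono (us : List α) (v : α) : H.state us ⊆ H.state (us ++ [v]) := by
  rw [state_append]
  exact (H.subset_step _).trans (subset_insert _ _)

/-- greedy: any valid partial sequence extends to a full burning sequence -/
lemma exists_isBurningSeq : ∃ us : List α, H.IsBurningSeq us := by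
  suffices h : ∀ n (us : List α),
      (∀ i : Fin us.length, us.get i ∈ H.verts ∧ us.get i ∉ H.state (us.take i.1)) →
      (∀ u ∈ us, u ∈ H.verts) →
      (H.verts \ H.state us).card ≤ n → ∃ us' : List α, H.IsBurningSeq us' by
    exact h H.verts.card [] (fun i => absurd i.2 (by simp)) (by simp) (by simp [state])
  intro n
  induction n with
  | zero =>
    intro us hvalid hmem hcard
    refine ⟨us, hvalid, ?_⟩
    have h1 : H.verts ⊆ H.state us := by
      rw [← sdiff_eq_empty_iff_subset]
      exact card_eq_zero.1 (Nat.le_zero.1 hcard)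
    exact subset_antisymm (H.state_subset_verts hmem) h1 |>.symm ▸ rfl
  | succ n ih =>
    intro us hvalid hmem hcard
    by_cases hdone : H.state us = H.verts
    · exact ⟨us, hvalid, hdone⟩
    · have hsub : H.state us ⊆ H.verts := H.state_subset_verts hmem
      have hne : (H.verts \ H.state us).Nonempty := by
        rw [sdiff_nonempty]
        intro hc
        exact hdone (subset_antisymm hsub hc)
      obtain ⟨v, hv⟩ := hne
      rw [mem_sdiff] at hv
      refine ih (us ++ [v]) ?_ ?_ ?_
      · intro i
        rcases Nat.lt_succ_iff_lt_or_eq.1 (by simpa using i.2) with h | h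
        · have hget : (us ++ [v]).get i = us.get ⟨i.1, h⟩ := by
            simp [List.getElem_append_left h]
          have htake : (us ++ [v]).take i.1 = us.take i.1 := by
            rw [List.take_append, Nat.sub_eq_zero_of_le h.le]
            simp
          rw [hget, htake]
          exact hvalid ⟨i.1, h⟩
        · have hget : (us ++ [v]).get i = v := by
            simp only [List.get_eq_getElem, h]
            simp
          have htake : (us ++ [v]).take i.1 = us := by
            rw [h]
            exact List.take_left
          rw [hget, htake]
          exact ⟨hv.1, hv.2⟩
      · intro u hu
        rcases List.mem_append.1 hu with h | h
        · exact hmem u h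
        · simp at h; subst h; exact hv.1
      · have hlt : (H.verts \ H.state (us ++ [v])).card < (H.verts \ H.state us).card := by
          apply card_lt_card
          constructor
          · exact sdiff_subset_sdiff le_rfl (H.state_mono us v)
          · intro hc
            have : v ∈ H.verts \ H.state (us ++ [v]) := hc (mem_sdiff.2 hv)
            rw [mem_sdiff, state_append] at this
            exact this.2 (mem_insert_self _ _)
        omega

end BurnHypergraph

/-- The "nested intervals" hypergraph on `{0, …, N-1}`. -/
def Nested (N : ℕ) : BurnHypergraph ℕ where
  verts := range N
  edges := (range N).image (fun i => range (i + 1))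
  edges_sub := by
    intro e he
    simp only [mem_image, mem_range] at he
    obtain ⟨i, hi, rfl⟩ := he
    exact range_subset_range.2 hi

namespace Nested

variable {N : ℕ}

lemma verts_def : (Nested N).verts = range N := rfl

lemma edge_iff {e : Finset ℕ} : e ∈ (Nested N).edges ↔ ∃ i < N, e = range (i + 1) := by
  simp [Nested, eq_comm]

lemma burns_singleton_zero (hN : 0 < N) : ∀ v < N, (Nested N).Burns {0} v := by
  intro v
  induction v using Nat.strong_induction_on with
  | _ v ih =>
    intro hv
    match v with
    | 0 => exact BurnHypergraph.Burns.init (mem_singleton_self 0)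
    | w + 1 =>
      refine BurnHypergraph.Burns.prop (e := range (w + 2)) (by simp [verts_def, hv]) ?_ ?_ ?_ ?_
      · exact edge_iff.2 ⟨w + 1, hv, rfl⟩
      · simp
      · simp
      · intro u hu hne
        rw [mem_range] at hu
        have : u < w + 1 := by omega
        exact ih u this (by omega)

lemma not_burns_empty (v : ℕ) : ¬ (Nested N).Burns ∅ v := by
  intro h
  induction h with
  | init h => simp at h
  | @prop w e hv he hc hve hu ih =>
    obtain ⟨u, hue, hune⟩ := Finset.exists_mem_ne hc w
    exact ih u hue hune

lemma lazyBurn_eq_one (hN : 0 < N) : (Nested N).lazyBurn = 1 := by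
  have h1 : 1 ∈ {n | ∃ S : Finset ℕ, (Nested N).IsLazySet S ∧ S.card = n} := by
    refine ⟨{0}, ⟨?_, ?_⟩, card_singleton 0⟩
    · simp [verts_def, hN]
    · intro v hv
      exact burns_singleton_zero hN v (by simpa [verts_def] using hv)
  have h0 : 0 ∉ {n | ∃ S : Finset ℕ, (Nested N).IsLazySet S ∧ S.card = n} := by
    rintro ⟨S, ⟨-, hS⟩, hcard⟩
    rw [card_eq_zero] at hcard
    subst hcard
    exact not_burns_empty 0 (hS 0 (by simp [verts_def, hN]))
  refine le_antisymm (Nat.sInf_le h1) ?_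
  rcases Nat.eq_zero_or_pos (sInf {n | ∃ S : Finset ℕ, (Nested N).IsLazySet S ∧ S.card = n}) with h | h
  · exact absurd (h ▸ Nat.sInf_mem ⟨1, h1⟩) h0
  · exact h

/-- key: each propagation round adds at most one vertex -/
lemma card_step_le (F : Finset ℕ) : ((Nested N).step F).card ≤ F.card + 1 := by
  set A := (Nested N).verts.filter
    (fun v => ∃ e ∈ (Nested N).edges, 2 ≤ e.card ∧ v ∈ e ∧ e \ {v} ⊆ F) with hA
  have hstep : (Nested N).step F = F ∪ (A \ F) := by
    rw [BurnHypergraph.step, union_sdiff_self_eq_union]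
  have hone : (A \ F).card ≤ 1 := by
    rw [card_le_one]
    intro a ha b hb
    rw [mem_sdiff, hA, mem_filter] at ha hb
    obtain ⟨⟨-, e, he, hec, hae, haF⟩, hanF⟩ := ha
    obtain ⟨⟨-, f, hf, hfc, hbf, hbF⟩, hbnF⟩ := hb
    obtain ⟨i, -, rfl⟩ := edge_iff.1 he
    obtain ⟨j, -, rfl⟩ := edge_iff.1 hf
    by_contra hne
    rcases lt_or_gt_of_ne hne with h | h
    · have : a ∈ range (j + 1) \ {b} := by
        rw [mem_range] at hbf
        simp only [mem_sdiff, mem_range, mem_singleton]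
        omega
      exact hanF (hbF this)
    · have : b ∈ range (i + 1) \ {a} := by
        rw [mem_range] at hae
        simp only [mem_sdiff, mem_range, mem_singleton]
        omega
      exact hbnF (haF this)
  calc ((Nested N).step F).card = (F ∪ (A \ F)).card := by rw [hstep]
    _ ≤ F.card + (A \ F).card := card_union_le _ _
    _ ≤ F.card + 1 := by omega

lemma card_state_le (us : List ℕ) : ((Nested N).state us).card ≤ 2 * us.length := by
  suffices h : ∀ (us : List ℕ) (F : Finset ℕ),
      (us.foldl (fun F u => insert u ((Nested N).step F)) F).card ≤ F.card + 2 * us.length by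
    simpa [BurnHypergraph.state] using h us ∅
  intro us
  induction us with
  | nil => simp
  | cons u us ih =>
    intro F
    calc ((u :: us).foldl (fun F u => insert u ((Nested N).step F)) F).card
        = (us.foldl (fun F u => insert u ((Nested N).step F)) (insert u ((Nested N).step F))).card := rfl
      _ ≤ (insert u ((Nested N).step F)).card + 2 * us.length := ih _
      _ ≤ ((Nested N).step F).card + 1 + 2 * us.length := by
          have := card_insert_le u ((Nested N).step F); omega
      _ ≤ F.card + 2 + 2 * us.length := by have := card_step_le (N := N) F; omega
      _ = F.card + 2 * (u :: us).length := by simp; ring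

lemma burn_ge (m : ℕ) : m ≤ (Nested (2 * m)).burn := by
  obtain ⟨us0, hus0⟩ := (Nested (2 * m)).exists_isBurningSeq
  refine le_csInf ⟨us0.length, us0, hus0, rfl⟩ ?_
  rintro n ⟨us, ⟨-, hfull⟩, rfl⟩
  have h1 : ((Nested (2 * m)).state us).card ≤ 2 * us.length := card_state_le us
  rw [hfull] at h1
  simp only [verts_def, card_range] at h1
  omega

end Nested

theorem burn_sub_lazyBurn_unbounded (k : ℕ) :
    (∃ H : BurnHypergraph ℕ, H.burn - H.lazyBurn > k) ∧
    (∃ H' : BurnHypergraph ℕ, ((H'.burn : ℚ) / (H'.lazyBurn : ℚ)) > (k : ℚ)) := by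
  have hN : 0 < 2 * (k + 2) := by omega
  have hlazy : (Nested (2 * (k + 2))).lazyBurn = 1 := Nested.lazyBurn_eq_one hN
  have hburn : k + 2 ≤ (Nested (2 * (k + 2))).burn := Nested.burn_ge (k + 2)
  constructor
  · exact ⟨Nested (2 * (k + 2)), by omega⟩
  · refine ⟨Nested (2 * (k + 2)), ?_⟩
    rw [hlazy]
    push_cast
    rw [div_one]
    exact_mod_cast by omega
end

section
/- Let G be the weak subhypergraph of H induced by a vertex set V' ⊆ V(H), i.e., V(G) = V' and E(G) = {e ∩ V' : e ∈ E(H), e ∩ V' ≠ ∅}. If |E(G)| = |E(H)| and E(G) contains no singleton edges (equivalently, every edge of H meets V' in at least two vertices), then b_L(G) ≤ b_L(H). -/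
open Finset

theorem lazyBurn_weak_induced_le {α : Type*} [DecidableEq α]
    (H G : FinHypergraph α) (V' : Finset α) (hV' : V' ⊆ H.verts)
    (hGv : G.verts = V')
    (hGe : G.edges = (H.edges.image (fun e => e ∩ V')).filter (fun e => e.Nonempty))
    (hcard : G.edges.card = H.edges.card)
    (hmeet : ∀ e ∈ H.edges, 2 ≤ (e ∩ V').card) :
    G.lazyBurn ≤ H.lazyBurn := by
  -- Transfer burning from H to G
  have key : ∀ S : Finset α, ∀ v, H.Burns S v → v ∈ V' → G.Burns (S ∩ V') v := by
    intro S v hb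
    induction hb with
    | init h => intro hv; exact FinHypergraph.Burns.init (Finset.mem_inter.mpr ⟨h, hv⟩)
    | prop hv he hc hve hall ih =>
      intro hvV
      refine FinHypergraph.Burns.prop (v := _) (e := _ ∩ V') (hGv ▸ hvV) ?_ (hmeet _ he) (Finset.mem_inter.mpr ⟨hve, hvV⟩) ?_
      · rw [hGe, Finset.mem_filter]
        refine ⟨Finset.mem_image_of_mem _ he, ?_⟩
        have := hmeet _ he
        exact Finset.card_pos.mp (by omega)
      · intro u hu hne
        rcases Finset.mem_inter.mp hu with ⟨hue, huV⟩
        exact ih u hue hne huV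
  -- H has a minimum lazy set
  have hne : {n | ∃ S : Finset α, H.IsLazySet S ∧ S.card = n}.Nonempty :=
    ⟨H.verts.card, H.verts, ⟨le_refl _, fun v hv => FinHypergraph.Burns.init hv⟩, rfl⟩
  obtain ⟨S, hS, hScard⟩ := Nat.sInf_mem hne
  have hlazy : G.IsLazySet (S ∩ V') := by
    constructor
    · rw [hGv]; exact Finset.inter_subset_right
    · intro v hv
      rw [hGv] at hv
      exact key S v (hS.2 v (hV' hv)) hv
  calc G.lazyBurn ≤ (S ∩ V').card := Nat.sInf_le ⟨S ∩ V', hlazy, rfl⟩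
    _ ≤ S.card := Finset.card_le_card Finset.inter_subset_left
    _ = H.lazyBurn := hScard
end

section
/- Let G be the weak subhypergraph of H induced by a vertex set V' ⊆ V(H) (so E(G) = {e ∩ V' : e ∈ E(H), e ∩ V' ≠ ∅}). If |E(G)| = |E(H)| and every edge of H intersects V' in at least two vertices, then b(G) ≤ b(H). -/
open Finset

namespace BurnAux

open BurnHypergraph

variable {α : Type*} [DecidableEq α]

lemma subset_step (H : BurnHypergraph α) (F : Finset α) : F ⊆ H.step F :=
  Finset.subset_union_left

lemma step_mono (H : BurnHypergraph α) {F F' : Finset α} (h : F ⊆ F') :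
    H.step F ⊆ H.step F' := by
  intro x hx
  rcases Finset.mem_union.1 hx with hx | hx
  · exact Finset.mem_union_left _ (h hx)
  · refine Finset.mem_union_right _ ?_
    rw [Finset.mem_filter] at hx ⊢
    obtain ⟨hxv, e, he, hc, hxe, hsub⟩ := hx
    exact ⟨hxv, e, he, hc, hxe, hsub.trans h⟩

lemma step_subset_verts (H : BurnHypergraph α) {F : Finset α} (h : F ⊆ H.verts) :
    H.step F ⊆ H.verts :=
  Finset.union_subset h (Finset.filter_subset _ _)

lemma foldl_subset_verts (H : BurnHypergraph α) (us : List α) (F : Finset α)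
    (hF : F ⊆ H.verts) (hus : ∀ u ∈ us, u ∈ H.verts) :
    us.foldl (fun F u => insert u (H.step F)) F ⊆ H.verts := by
  induction us generalizing F with
  | nil => exact hF
  | cons a l ih =>
      exact ih _ (Finset.insert_subset (hus a (by simp))
        (step_subset_verts H hF)) (fun u hu => hus u (by simp [hu]))

/-- A valid prefix of a burning sequence. -/
def Valid (H : BurnHypergraph α) (us : List α) : Prop :=
  ∀ i : Fin us.length, us.get i ∈ H.verts ∧ us.get i ∉ H.state (us.take i.1)

lemma valid_mem_verts {H : BurnHypergraph α} {us : List α} (h : Valid H us) :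
    ∀ u ∈ us, u ∈ H.verts := by
  intro u hu
  obtain ⟨i, rfl⟩ := List.mem_iff_get.1 hu
  exact (h i).1

lemma state_subset_verts {H : BurnHypergraph α} {us : List α} (h : Valid H us) :
    H.state us ⊆ H.verts :=
  foldl_subset_verts H us ∅ (Finset.empty_subset _) (valid_mem_verts h)

lemma state_append_singleton (H : BurnHypergraph α) (us : List α) (v : α) :
    H.state (us ++ [v]) = insert v (H.step (H.state us)) := by
  simp [BurnHypergraph.state, List.foldl_append]

lemma valid_append {H : BurnHypergraph α} {us : List α} {v : α} (h : Valid H us)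
    (hv : v ∈ H.verts) (hv' : v ∉ H.state us) : Valid H (us ++ [v]) := by
  intro i
  have hlen : (us ++ [v]).length = us.length + 1 := by simp
  rcases lt_or_ge i.1 us.length with hi | hi
  · have hget : (us ++ [v]).get i = us.get ⟨i.1, hi⟩ := by
      simp [List.get_eq_getElem, List.getElem_append_left hi]
    have htake : (us ++ [v]).take i.1 = us.take i.1 :=
      List.take_append_of_le_length (le_of_lt hi)
    rw [hget, htake]
    exact h ⟨i.1, hi⟩
  · have hieq : i.1 = us.length := by
      have := i.2; omega
    have hget : (us ++ [v]).get i = v := by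
      simp [List.get_eq_getElem, hieq]
    have htake : (us ++ [v]).take i.1 = us := by
      rw [hieq]
      simpa using List.take_append_of_le_length (l₂ := [v]) (le_refl us.length)
    rw [hget, htake]
    exact ⟨hv, hv'⟩

lemma exists_burning (H : BurnHypergraph α) : ∃ us, H.IsBurningSeq us := by
  suffices h : ∀ m (vs : List α), Valid H vs → (H.verts \ H.state vs).card ≤ m →
      ∃ us, H.IsBurningSeq us by
    refine h H.verts.card [] (fun i => absurd i.2 (by simp)) ?_
    exact Finset.card_le_card (Finset.sdiff_subset)
  intro m
  induction m with
  | zero =>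
      intro vs hval hcard
      refine ⟨vs, hval, ?_⟩
      have h1 : H.state vs ⊆ H.verts := state_subset_verts hval
      have h2 : H.verts \ H.state vs = ∅ := Finset.card_eq_zero.1 (Nat.le_zero.1 hcard)
      have h3 : H.verts ⊆ H.state vs := by
        intro x hx
        by_contra hx'
        have : x ∈ H.verts \ H.state vs := Finset.mem_sdiff.2 ⟨hx, hx'⟩
        simp [h2] at this
      exact Finset.Subset.antisymm h1 h3
  | succ m ih =>
      intro vs hval hcard
      by_cases hss : H.verts ⊆ H.state vs
      · exact ⟨vs, hval, Finset.Subset.antisymm (state_subset_verts hval) hss⟩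
      · obtain ⟨v, hv, hv'⟩ := Finset.not_subset.1 hss
        have hvmem : v ∈ H.verts \ H.state vs := Finset.mem_sdiff.2 ⟨hv, hv'⟩
        refine ih (vs ++ [v]) (valid_append hval hv hv') ?_
        have hsub : H.verts \ H.state (vs ++ [v]) ⊆ (H.verts \ H.state vs).erase v := by
          intro x hx
          rw [Finset.mem_sdiff, state_append_singleton] at hx
          obtain ⟨hx1, hx2⟩ := hx
          refine Finset.mem_erase.2 ⟨?_, Finset.mem_sdiff.2 ⟨hx1, ?_⟩⟩
          · rintro rfl; exact hx2 (Finset.mem_insert_self _ _)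
          · intro hx3
            exact hx2 (Finset.mem_insert_of_mem (subset_step H _ hx3))
        have hc1 := Finset.card_le_card hsub
        have hc2 := Finset.card_erase_lt_of_mem hvmem
        omega

end BurnAux

theorem burn_weak_induced_le {α : Type*} [DecidableEq α]
    (H G : BurnHypergraph α) (V' : Finset α) (hV' : V' ⊆ H.verts)
    (hGv : G.verts = V')
    (hGe : G.edges = (H.edges.image (fun e => e ∩ V')).filter (fun e => e.Nonempty))
    (hcard : G.edges.card = H.edges.card)
    (hmeet : ∀ e ∈ H.edges, 2 ≤ (e ∩ V').card) :
    G.burn ≤ H.burn := by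
  classical
  open BurnAux in
  -- key propagation transfer lemma
  have key_step : ∀ S F : Finset α, S ∩ V' ⊆ F → H.step S ∩ V' ⊆ G.step F := by
    intro S F hSF x hx
    obtain ⟨hx1, hx2⟩ := Finset.mem_inter.1 hx
    rcases Finset.mem_union.1 hx1 with hxS | hxP
    · exact BurnAux.subset_step G F (hSF (Finset.mem_inter.2 ⟨hxS, hx2⟩))
    · rw [Finset.mem_filter] at hxP
      obtain ⟨hxv, e, he, hce, hxe, hsub⟩ := hxP
      refine Finset.mem_union_right _ (Finset.mem_filter.2 ⟨?_, e ∩ V', ?_, ?_, ?_, ?_⟩)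
      · rw [hGv]; exact hx2
      · rw [hGe, Finset.mem_filter]
        refine ⟨Finset.mem_image.2 ⟨e, he, rfl⟩, ?_⟩
        exact Finset.card_pos.1 (lt_of_lt_of_le (by norm_num) (hmeet e he))
      · exact hmeet e he
      · exact Finset.mem_inter.2 ⟨hxe, hx2⟩
      · intro y hy
        obtain ⟨hy1, hy2⟩ := Finset.mem_sdiff.1 hy
        obtain ⟨hye, hyV⟩ := Finset.mem_inter.1 hy1
        exact hSF (Finset.mem_inter.2 ⟨hsub (Finset.mem_sdiff.2 ⟨hye, hy2⟩), hyV⟩)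
  obtain ⟨us, hus, hlen⟩ : ∃ us, H.IsBurningSeq us ∧ us.length = H.burn := by
    obtain ⟨us, hus⟩ := BurnAux.exists_burning H
    have : H.burn ∈ {n | ∃ us : List α, H.IsBurningSeq us ∧ us.length = n} :=
      Nat.sInf_mem ⟨us.length, us, hus, rfl⟩
    exact this
  have key : ∀ i, i ≤ us.length →
      (∃ vs, G.IsBurningSeq vs ∧ vs.length ≤ i) ∨
      (∃ vs, BurnAux.Valid G vs ∧ vs.length = i ∧
        H.state (us.take i) ∩ V' ⊆ G.state vs) := by
    intro i
    induction i with
    | zero =>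
        intro _
        right
        exact ⟨[], fun j => absurd j.2 (by simp), rfl, by simp [BurnHypergraph.state]⟩
    | succ i ih =>
        intro hi1
        rcases ih (Nat.le_of_succ_le hi1) with ⟨vs, h1, h2⟩ | ⟨vs, hval, hlenv, hinv⟩
        · exact Or.inl ⟨vs, h1, h2.trans (Nat.le_succ i)⟩
        by_cases hdone : G.verts ⊆ G.state vs
        · exact Or.inl ⟨vs, ⟨hval, Finset.Subset.antisymm
            (BurnAux.state_subset_verts hval) hdone⟩, hlenv ▸ Nat.le_succ i⟩
        obtain ⟨w, hw, hw'⟩ := Finset.not_subset.1 hdone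
        have hilt : i < us.length := hi1
        set u := us.get ⟨i, hilt⟩ with hu_def
        have htake : us.take (i + 1) = us.take i ++ [u] := by
          rw [List.take_succ]
          simp [List.getElem?_eq_getElem hilt, hu_def]
        have hstate_succ : H.state (us.take (i + 1)) =
            insert u (H.step (H.state (us.take i))) := by
          rw [htake, BurnAux.state_append_singleton]
        -- choose source
        by_cases hu : u ∈ V' ∧ u ∉ G.state vs
        · -- use u itself
          refine Or.inr ⟨vs ++ [u], BurnAux.valid_append hval (hGv ▸ hu.1) hu.2,
            by simp [hlenv], ?_⟩
          rw [hstate_succ, BurnAux.state_append_singleton]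
          intro x hx
          obtain ⟨hx1, hx2⟩ := Finset.mem_inter.1 hx
          rcases Finset.mem_insert.1 hx1 with rfl | hx1
          · exact Finset.mem_insert_self _ _
          · exact Finset.mem_insert_of_mem
              (key_step _ _ hinv (Finset.mem_inter.2 ⟨hx1, hx2⟩))
        · -- use w
          refine Or.inr ⟨vs ++ [w], BurnAux.valid_append hval hw hw',
            by simp [hlenv], ?_⟩
          rw [hstate_succ, BurnAux.state_append_singleton]
          intro x hx
          obtain ⟨hx1, hx2⟩ := Finset.mem_inter.1 hx
          rcases Finset.mem_insert.1 hx1 with rfl | hx1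
          · -- x = u; since ¬(u ∈ V' ∧ u ∉ G.state vs) and u ∈ V', u ∈ G.state vs
            have : u ∈ G.state vs := by
              by_contra hc
              exact hu ⟨hx2, hc⟩
            exact Finset.mem_insert_of_mem (BurnAux.subset_step G _ this)
          · exact Finset.mem_insert_of_mem
              (key_step _ _ hinv (Finset.mem_inter.2 ⟨hx1, hx2⟩))
  have burn_le : ∀ vs : List α, G.IsBurningSeq vs → G.burn ≤ vs.length := by
    intro vs hvs
    exact Nat.sInf_le ⟨vs, hvs, rfl⟩
  rcases key us.length le_rfl with ⟨vs, h1, h2⟩ | ⟨vs, hval, hlenv, hinv⟩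
  · exact (burn_le vs h1).trans (h2.trans_eq hlen)
  · have hfull : G.state vs = G.verts := by
      refine Finset.Subset.antisymm (BurnAux.state_subset_verts hval) ?_
      rw [hGv]
      intro x hx
      refine hinv (Finset.mem_inter.2 ⟨?_, hx⟩)
      rw [List.take_length, hus.2]
      exact hV' hx
    have := burn_le vs ⟨hval, hfull⟩
    rw [hlenv, hlen] at this
    exact this
end
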